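/- arXiv:2302.00742 — 8 statements merged into one kernel-verified Lean document; each statement's English description precedes it below -/
import Mathlib

section
/- Let P = (u_1, …, u_ℓ) be a path in a finite simple graph G. If P is not cycled, then P is sociable. -/
/-- `P` is a *cycled* path: either its endpoints are adjacent, or there exists an edge
`{uᵢ, uᵢ₊₁}` of `P` such that the first endpoint is adjacent to `uᵢ₊₁` and `uᵢ` is
adjacent to the last endpoint. -/
def SimpleGraph.Walk.IsCycled {V : Type*} {G : SimpleGraph V} {a b : V}
    (P : G.Walk a b) : Prop :=
  G.Adj a b ∨ ∃ j < P.length, G.Adj a (P.getVert (j + 1)) ∧ G.Adj (P.getVert j) b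

/-- `dOn G P x` is the number of neighbors of `x` in `G` that lie on the walk `P`. -/
def dOn {V : Type*} [DecidableEq V] (G : SimpleGraph V) [DecidableRel G.Adj]
    {a b : V} (P : G.Walk a b) (x : V) : ℕ :=
  (P.support.toFinset.filter (fun y => G.Adj x y)).card

/-- `getVert` is injective on indices up to the length, for a path. -/
theorem getVert_inj_aux {V : Type*} {G : SimpleGraph V} :
    ∀ {a b : V} (P : G.Walk a b), P.IsPath →
      ∀ m ≤ P.length, ∀ n ≤ P.length, P.getVert m = P.getVert n → m = n := by
  intro a b P
  induction P with
  | nil =>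
    intro _ m hm n hn _
    simp only [SimpleGraph.Walk.length_nil, Nat.le_zero] at hm hn
    omega
  | cons h q ih =>
    intro hp m hm n hn heq
    have hq := hp.of_cons
    have hna : (_ : V) ∉ q.support := (SimpleGraph.Walk.cons_isPath_iff _ _).mp hp |>.2
    match m, n with
    | 0, 0 => rfl
    | 0, n + 1 =>
      exfalso
      apply hna
      rw [SimpleGraph.Walk.mem_support_iff_exists_getVert]
      refine ⟨n, ?_, ?_⟩
      · simpa [SimpleGraph.Walk.getVert_cons_succ] using heq.symm
      · simpa [SimpleGraph.Walk.length_cons] using hn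
    | m + 1, 0 =>
      exfalso
      apply hna
      rw [SimpleGraph.Walk.mem_support_iff_exists_getVert]
      refine ⟨m, ?_, ?_⟩
      · simpa [SimpleGraph.Walk.getVert_cons_succ] using heq
      · simpa [SimpleGraph.Walk.length_cons] using hm
    | m + 1, n + 1 =>
      have := ih hq m (by simpa [SimpleGraph.Walk.length_cons] using hm)
        n (by simpa [SimpleGraph.Walk.length_cons] using hn)
        (by simpa [SimpleGraph.Walk.getVert_cons_succ] using heq)
      omega

/-- If a path `P = (u₁, …, u_ℓ)` is not cycled, then it is sociable, i.e.
`d_P(u₁) + d_P(u_ℓ) + 1 ≤ |V(P)|`. -/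
theorem stmt0 {V : Type*} [DecidableEq V] (G : SimpleGraph V) [DecidableRel G.Adj]
    {a b : V} (P : G.Walk a b) (hP : P.IsPath) (hnc : ¬ P.IsCycled) :
    dOn G P a + dOn G P b + 1 ≤ P.support.toFinset.card := by
  classical
  set ℓ := P.length with hl
  have hinj := getVert_inj_aux P hP
  have hcard : P.support.toFinset.card = ℓ + 1 := by
    rw [List.toFinset_card_of_nodup hP.support_nodup, SimpleGraph.Walk.length_support]
  set A : Finset ℕ := (Finset.range ℓ).filter (fun j => G.Adj a (P.getVert (j + 1))) with hA
  set B : Finset ℕ := (Finset.range ℓ).filter (fun j => G.Adj b (P.getVert j)) with hB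
  have hdA : dOn G P a = A.card := by
    unfold dOn
    refine (Finset.card_bij (fun j _ => P.getVert (j + 1)) ?_ ?_ ?_).symm
    · intro j hj
      simp only [hA, Finset.mem_filter, Finset.mem_range] at hj
      simp only [Finset.mem_filter, List.mem_toFinset]
      exact ⟨SimpleGraph.Walk.mem_support_iff_exists_getVert.mpr ⟨j + 1, rfl, by omega⟩, hj.2⟩
    · intro i hi j hj heq
      simp only [hA, Finset.mem_filter, Finset.mem_range] at hi hj
      have := hinj (i + 1) (by omega) (j + 1) (by omega) heq
      omega
    · intro y hy
      simp only [Finset.mem_filter, List.mem_toFinset] at hy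
      obtain ⟨n, hn, hnl⟩ := SimpleGraph.Walk.mem_support_iff_exists_getVert.mp hy.1
      have hn0 : n ≠ 0 := by
        rintro rfl
        rw [SimpleGraph.Walk.getVert_zero] at hn
        exact G.irrefl (hn ▸ hy.2)
      obtain ⟨j, rfl⟩ := Nat.exists_eq_succ_of_ne_zero hn0
      exact ⟨j, by simp only [hA, Finset.mem_filter, Finset.mem_range]; exact ⟨by omega, hn ▸ hy.2⟩, hn⟩
  have hdB : dOn G P b = B.card := by
    unfold dOn
    refine (Finset.card_bij (fun j _ => P.getVert j) ?_ ?_ ?_).symm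
    · intro j hj
      simp only [hB, Finset.mem_filter, Finset.mem_range] at hj
      simp only [Finset.mem_filter, List.mem_toFinset]
      exact ⟨SimpleGraph.Walk.mem_support_iff_exists_getVert.mpr ⟨j, rfl, by omega⟩, hj.2⟩
    · intro i hi j hj heq
      simp only [hB, Finset.mem_filter, Finset.mem_range] at hi hj
      exact hinj i (by omega) j (by omega) heq
    · intro y hy
      simp only [Finset.mem_filter, List.mem_toFinset] at hy
      obtain ⟨n, hn, hnl⟩ := SimpleGraph.Walk.mem_support_iff_exists_getVert.mp hy.1
      have hnL : n ≠ ℓ := by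
        rintro rfl
        rw [SimpleGraph.Walk.getVert_length] at hn
        exact G.irrefl (hn ▸ hy.2)
      exact ⟨n, by simp only [hB, Finset.mem_filter, Finset.mem_range]; exact ⟨by omega, hn ▸ hy.2⟩, hn⟩
  have hdisj : Disjoint A B := by
    rw [Finset.disjoint_left]
    intro j hjA hjB
    simp only [hA, Finset.mem_filter, Finset.mem_range] at hjA
    simp only [hB, Finset.mem_filter, Finset.mem_range] at hjB
    exact hnc (Or.inr ⟨j, hjA.1, hjA.2, hjB.2.symm⟩)
  have hsub : A ∪ B ⊆ Finset.range ℓ := by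
    intro j hj
    rcases Finset.mem_union.mp hj with h | h
    · exact Finset.mem_of_mem_filter j h
    · exact Finset.mem_of_mem_filter j h
  have : A.card + B.card ≤ ℓ := by
    rw [← Finset.card_union_of_disjoint hdisj]
    simpa using Finset.card_le_card hsub
  omega
end

section
/- Let P be a path in a finite simple graph G with |V(P)| ≥ 3. If P is cycled, then the subgraph of G induced on the vertex set V(P) contains a Hamiltonian cycle (a cycle visiting every vertex of V(P) exactly once). -/
namespace SimpleGraph.Walk

variable {V : Type*} {G : SimpleGraph V}

lemma getVert_mem_support' {u v : V} (p : G.Walk u v) (n : ℕ) :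
    p.getVert n ∈ p.support := by
  induction p generalizing n with
  | nil => simp [getVert]
  | cons h q ih =>
    cases n with
    | zero => simp [getVert]
    | succ n => simp only [getVert_cons_succ, support_cons, List.mem_cons]; exact Or.inr (ih n)

lemma IsPath.getVert_injOn' {u v : V} {p : G.Walk u v} (hp : p.IsPath) :
    ∀ i ≤ p.length, ∀ j ≤ p.length, p.getVert i = p.getVert j → i = j := by
  induction p with
  | nil => intro i hi j hj _; simp only [length_nil, Nat.le_zero] at hi hj; omega
  | cons h q ih =>
    intro i hi j hj hij
    rw [isPath_def, support_cons, List.nodup_cons, ← isPath_def] at hp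
    cases i with
    | zero =>
      cases j with
      | zero => rfl
      | succ j =>
        exfalso
        rw [getVert_zero, getVert_cons_succ] at hij
        exact hp.1 (hij ▸ q.getVert_mem_support' j)
    | succ i =>
      cases j with
      | zero =>
        exfalso
        rw [getVert_zero, getVert_cons_succ] at hij
        exact hp.1 (hij ▸ q.getVert_mem_support' i)
      | succ j =>
        simp only [getVert_cons_succ] at hij
        simp only [length_cons, Nat.add_le_add_iff_right] at hi hj
        exact congrArg Nat.succ (ih hp.2 i hi j hj hij)

/-- Take the first `n` darts of a walk. -/
def take' {u v : V} : (p : G.Walk u v) → (n : ℕ) → G.Walk u (p.getVert n)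
  | p, 0 => Walk.nil.copy rfl (p.getVert_zero).symm
  | .nil, _ + 1 => Walk.nil
  | .cons h q, n + 1 => Walk.cons h (q.take' n)

@[simp] lemma support_take' {u v : V} (p : G.Walk u v) (n : ℕ) :
    (p.take' n).support = p.support.take (n + 1) := by
  induction p generalizing n with
  | nil => cases n <;> simp [take']
  | cons h q ih =>
    cases n with
    | zero => simp [take']
    | succ n => simp [take', ih]

lemma support_drop' {u v : V} (p : G.Walk u v) (n : ℕ) (hn : n ≤ p.length) :
    (p.drop n).support = p.support.drop n := by
  induction p generalizing n with
  | nil =>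
    simp only [length_nil, Nat.le_zero] at hn
    subst hn; simp [drop]
  | cons h q ih =>
    cases n with
    | zero => simp [drop]
    | succ n =>
      simp only [drop, support_copy, support_cons, List.drop_succ_cons]
      exact ih n (by simpa using hn)

lemma IsPath.eq_getVert_one_of_mem_edges {u v x : V} {p : G.Walk u v} (hp : p.IsPath)
    (hx : s(u, x) ∈ p.edges) : x = p.getVert 1 := by
  cases p with
  | nil => simp at hx
  | cons h q =>
    rw [isPath_def, support_cons, List.nodup_cons, ← isPath_def] at hp
    simp only [edges_cons, List.mem_cons] at hx
    rcases hx with hx | hx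
    · rw [Sym2.eq_iff] at hx
      rcases hx with ⟨-, rfl⟩ | ⟨rfl, rfl⟩
      · rw [getVert_cons_succ, getVert_zero]
      · exact absurd rfl h.ne
    · exact absurd (q.fst_mem_support_of_mem_edges hx) hp.1

/-- Lift a walk whose support lies in `s` to the induced subgraph on `s`. -/
def induceUp {s : Set V} : ∀ {u v : V} (p : G.Walk u v) (h : ∀ x ∈ p.support, x ∈ s),
    (G.induce s).Walk ⟨u, h u p.start_mem_support⟩ ⟨v, h v p.end_mem_support⟩
  | _, _, .nil, _ => Walk.nil
  | _, _, @Walk.cons _ _ u w v ha p, h =>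
      Walk.cons (show (G.induce s).Adj ⟨u, h u (by simp)⟩ ⟨w, h w (by simp)⟩ from ha)
        (induceUp p (fun x hx => h x (by simp [hx])))

lemma map_induceUp {s : Set V} {u v : V} (p : G.Walk u v) (h : ∀ x ∈ p.support, x ∈ s) :
    (induceUp p h).map (SimpleGraph.Embedding.induce s).toHom = p := by
  induction p with
  | nil => rfl
  | cons ha q ih => simp only [induceUp, map_cons]; exact congrArg _ (ih _)

end SimpleGraph.Walk

namespace SimpleGraph.Walk

variable {V : Type*} {G : SimpleGraph V}

lemma exists_hamCycle_aux [DecidableEq V] {a b : V} (P : G.Walk a b)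
    (hnod : P.support.Nodup) {x : V} (hx : x ∈ P.support) (C : G.Walk x x)
    (hcyc : C.IsCycle) (hperm : C.support.tail.Perm P.support) :
    ∃ (y : ({v | v ∈ P.support} : Set V))
      (c : (G.induce {v | v ∈ P.support}).Walk y y), c.IsHamiltonianCycle := by
  classical
  have hsub : ∀ z ∈ C.support, z ∈ P.support := by
    intro z hz
    rw [support_eq_cons, List.mem_cons] at hz
    rcases hz with heq | hz
    · exact heq ▸ hx
    · exact hperm.mem_iff.mp hz
  have hsub' : ∀ z ∈ C.support, z ∈ ({v | v ∈ P.support} : Set V) := hsub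
  refine ⟨⟨x, hx⟩, induceUp C hsub', ?_⟩
  have hmapC : (induceUp C hsub').map (SimpleGraph.Embedding.induce _).toHom = C :=
    map_induceUp C hsub'
  have hinj : Function.Injective (SimpleGraph.Embedding.induce
      ({v | v ∈ P.support} : Set V) (G := G)).toHom := Subtype.val_injective
  have hqcyc : (induceUp C hsub').IsCycle := by
    rw [← map_isCycle_iff_of_injective hinj, hmapC]
    exact hcyc
  refine isHamiltonianCycle_isCycle_and_isHamiltonian_tail.mpr ⟨hqcyc, ?_⟩
  intro y
  have hqnil : ¬ (induceUp C hsub').Nil := by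
    rw [nil_iff_length_eq]
    have hlen : (induceUp C hsub').length = C.length := by
      have := congrArg Walk.length hmapC
      rwa [length_map] at this
    rw [hlen]
    intro h0
    exact hcyc.not_nil (nil_iff_length_eq.mpr h0)
  have hts : (induceUp C hsub').tail.support = (induceUp C hsub').support.tail :=
    support_tail_of_not_nil _ hqnil
  have hmaps : ((induceUp C hsub').support.map
      (SimpleGraph.Embedding.induce ({v | v ∈ P.support} : Set V) (G := G)).toHom).tail
      = C.support.tail := by
    have := congrArg Walk.support hmapC
    rw [support_map] at this
    exact congrArg List.tail this
  rw [hts]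
  convert (List.count_map_of_injective _ _ hinj y).symm.trans ?_
  rw [List.map_tail, hmaps, hperm.count_eq]
  exact List.count_eq_one_of_mem hnod y.2

end SimpleGraph.Walk


open SimpleGraph Walk in
/-- If a path `P` with at least `3` vertices is cycled, then the subgraph of `G`
induced on the vertex set of `P` contains a Hamiltonian cycle. -/
theorem stmt1 {V : Type*} [DecidableEq V] (G : SimpleGraph V)
    {a b : V} (P : G.Walk a b) (hP : P.IsPath)
    (h3 : 3 ≤ P.support.toFinset.card) (hc : P.IsCycled) :
    ∃ (x : ({v | v ∈ P.support} : Set V))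
      (c : (G.induce {v | v ∈ P.support}).Walk x x), c.IsHamiltonianCycle := by
  classical
  have hnod : P.support.Nodup := hP.support_nodup
  have hlen2 : 2 ≤ P.length := by
    have h1 : P.support.toFinset.card = P.support.length := List.toFinset_card_of_nodup hnod
    have h2 : P.support.length = P.length + 1 := P.length_support
    omega
  have hab : a ≠ b := by
    intro h
    have : (0 : ℕ) = P.length := hP.getVert_injOn' 0 (by omega) P.length le_rfl
      (by rw [P.getVert_zero, P.getVert_length]; exact h)
    omega
  have key1 : G.Adj a b → ∃ (x : ({v | v ∈ P.support} : Set V))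
      (c : (G.induce {v | v ∈ P.support}).Walk x x), c.IsHamiltonianCycle := by
    intro hadj
    have hC : (Walk.cons hadj.symm P).IsCycle := by
      rw [cons_isCycle_iff]
      refine ⟨hP, fun he => ?_⟩
      rw [Sym2.eq_swap] at he
      have hb1 := hP.eq_getVert_one_of_mem_edges he
      have : (1 : ℕ) = P.length := hP.getVert_injOn' 1 (by omega) P.length le_rfl
        (by rw [← hb1, P.getVert_length])
      omega
    exact P.exists_hamCycle_aux hnod P.end_mem_support _ hC
      (by rw [support_cons, List.tail_cons])
  rcases hc with hadj | ⟨j, hj, h1, h2⟩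
  · exact key1 hadj
  by_cases hadj : G.Adj a b
  · exact key1 hadj
  have hj0 : j ≠ 0 := by
    rintro rfl
    rw [P.getVert_zero] at h2
    exact hadj h2
  have hjtop : j + 1 < P.length := by
    rcases Nat.lt_or_ge (j + 1) P.length with h | h
    · exact h
    · exfalso
      have : j + 1 = P.length := by omega
      rw [this, P.getVert_length] at h1
      exact hadj h1
  have hQsup : ((P.drop (j+1)).append (Walk.cons h2.symm (P.take' j).reverse)).support
      = P.support.drop (j+1) ++ (P.support.take (j+1)).reverse := by
    rw [support_append, support_cons, List.tail_cons, support_reverse, support_take',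
      support_drop' _ _ (by omega)]
  have hperm : ((P.drop (j+1)).append (Walk.cons h2.symm (P.take' j).reverse)).support.Perm
      P.support := by
    rw [hQsup]
    refine ((List.reverse_perm _).append_left _).trans (List.perm_append_comm.trans ?_)
    rw [List.take_append_drop]
  have hQpath : ((P.drop (j+1)).append (Walk.cons h2.symm (P.take' j).reverse)).IsPath :=
    IsPath.mk' (hperm.nodup_iff.mpr hnod)
  have hedge : s(a, P.getVert (j+1)) ∉
      ((P.drop (j+1)).append (Walk.cons h2.symm (P.take' j).reverse)).edges := by
    intro he
    rw [edges_append, edges_cons, List.mem_append, List.mem_cons] at he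
    rcases he with he | he | he
    · have ha' : a ∈ (P.drop (j+1)).support := fst_mem_support_of_mem_edges _ he
      rw [support_drop' _ _ (by omega)] at ha'
      have hcons := P.support_eq_cons
      have hmem : a ∈ P.support.tail := by
        rw [hcons, List.drop_succ_cons] at ha'
        exact List.drop_subset _ _ ha'
      have hno : a ∉ P.support.tail := by
        have h' := hnod
        rw [hcons, List.nodup_cons] at h'
        exact h'.1
      exact hno hmem
    · rw [Sym2.eq_iff] at he
      rcases he with ⟨h1', h2'⟩ | ⟨h1', h2'⟩
      · exact hab h1'
      · have : (0 : ℕ) = j := hP.getVert_injOn' 0 (by omega) j (by omega)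
          (by rw [P.getVert_zero]; exact h1')
        omega
    · have hw : P.getVert (j+1) ∈ (P.take' j).reverse.support :=
        snd_mem_support_of_mem_edges _ he
      rw [support_reverse, List.mem_reverse, support_take'] at hw
      have hw2 : P.getVert (j+1) ∈ P.support.drop (j+1) := by
        have hstart := (P.drop (j+1)).start_mem_support
        rwa [support_drop' _ _ (by omega)] at hstart
      have hd : List.Disjoint (P.support.take (j+1)) (P.support.drop (j+1)) := by
        have h' := hnod
        rw [← List.take_append_drop (j+1) P.support, List.nodup_append] at h'
        exact List.disjoint_iff_ne.mpr h'.2.2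
      exact hd hw hw2
  have hCcyc : (Walk.cons h1
      ((P.drop (j+1)).append (Walk.cons h2.symm (P.take' j).reverse))).IsCycle := by
    rw [cons_isCycle_iff]
    exact ⟨hQpath, hedge⟩
  exact P.exists_hamCycle_aux hnod P.start_mem_support _ hCcyc
    (by rw [support_cons, List.tail_cons]; exact hperm)
end

section
/- Let G be a Dirac graph on n vertices. Let F be a maximal matching of G, let F' be the set of vertices matched by F, and let S be a maximal matching of the graph obtained from G by removing all edges with both endpoints in F'. Then every vertex of G is the endpoint of some edge in F ∪ S, and every connected component of the spanning subgraph of G with edge set F ∪ S is a path with at least 2 and at most 4 vertices. -/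
/-- A matching of `G` given as a set of edges: a set of edges of `G` that are pairwise
vertex-disjoint. -/
def IsMatchingSet {V : Type*} (G : SimpleGraph V) (M : Set (Sym2 V)) : Prop :=
  M ⊆ G.edgeSet ∧ ∀ e ∈ M, ∀ f ∈ M, e ≠ f → ∀ x, x ∈ e → x ∉ f

/-- A maximal matching of `G`: a matching such that no edge of `G` can be added to it while
keeping it a matching. -/
def IsMaximalMatchingSet {V : Type*} (G : SimpleGraph V) (M : Set (Sym2 V)) : Prop :=
  IsMatchingSet G M ∧ ∀ e ∈ G.edgeSet, e ∉ M → ∃ f ∈ M, ∃ x, x ∈ e ∧ x ∈ f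

private lemma walk_closed_aux {V : Type*} {H : SimpleGraph V} {T : Set V}
    (hT : ∀ a ∈ T, ∀ b, H.Adj a b → b ∈ T) :
    ∀ {x y : V} (_ : H.Walk x y), x ∈ T → y ∈ T := by
  intro x y w
  induction w with
  | nil => exact id
  | cons h p ih => exact fun hx => ih (hT _ hx _ h)

private lemma support_reach {V : Type*} [DecidableEq V] {H : SimpleGraph V} {a c u y : V}
    (w : H.Walk a c) (hu : u ∈ w.support) (hy : y ∈ w.support) : H.Reachable u y :=
  ((w.takeUntil u hu).reachable).symm.trans (w.takeUntil y hy).reachable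

/-- Let `G` be a Dirac graph, `F` a maximal matching of `G`, `F'` the set of vertices matched
by `F`, and `S` a maximal matching of the graph obtained from `G` by deleting all edges with
both endpoints in `F'`.  Then every vertex of `G` is an endpoint of some edge of `F ∪ S`,
and every connected component of the spanning subgraph with edge set `F ∪ S` is a path with
at least `2` and at most `4` vertices. -/
theorem stmt7 {V : Type*} [Fintype V] [DecidableEq V]
    (G : SimpleGraph V) [DecidableRel G.Adj]
    (hDirac : ∀ x : V, Fintype.card V ≤ 2 * G.degree x)
    (F S : Set (Sym2 V))
    (hF : IsMaximalMatchingSet G F)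
    (hS : IsMaximalMatchingSet
      (G.deleteEdges {e : Sym2 V | ∀ x ∈ e, ∃ f ∈ F, x ∈ f}) S) :
    (∀ x : V, ∃ e ∈ F ∪ S, x ∈ e) ∧
    (∀ x : V, ∃ (a c : V) (w : (SimpleGraph.fromEdgeSet (F ∪ S)).Walk a c),
      w.IsPath ∧
      (∀ y, y ∈ w.support ↔ (SimpleGraph.fromEdgeSet (F ∪ S)).Reachable x y) ∧
      2 ≤ w.support.length ∧ w.support.length ≤ 4) := by
  classical
  set H := SimpleGraph.fromEdgeSet (F ∪ S) with hHdef
  have hFsub : F ⊆ G.edgeSet := hF.1.1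
  have hSsub' : ∀ e ∈ S, e ∈ G.edgeSet ∧ ¬ (∀ x ∈ e, ∃ f ∈ F, x ∈ f) := by
    intro e he
    have h := hS.1.1 he
    rw [SimpleGraph.edgeSet_deleteEdges] at h
    exact ⟨h.1, h.2⟩
  have hne : ∀ a b : V, s(a,b) ∈ F ∪ S → a ≠ b := by
    intro a b hab
    rcases hab with h | h
    · exact ((G.mem_edgeSet).mp (hFsub h)).ne
    · exact ((G.mem_edgeSet).mp (hSsub' _ h).1).ne
  have hFu : ∀ e ∈ F, ∀ e' ∈ F, ∀ x : V, x ∈ e → x ∈ e' → e = e' := by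
    intro e he e' he' x hx hx'
    by_contra hcc
    exact hF.1.2 e he e' he' hcc x hx hx'
  have hSu : ∀ e ∈ S, ∀ e' ∈ S, ∀ x : V, x ∈ e → x ∈ e' → e = e' := by
    intro e he e' he' x hx hx'
    by_contra hcc
    exact hS.1.2 e he e' he' hcc x hx hx'
  have hSnb : ∀ a b : V, s(a,b) ∈ S → (∃ f ∈ F, a ∈ f) → (∃ f ∈ F, b ∈ f) → False := by
    intro a b hab hca hcb
    apply (hSsub' _ hab).2
    intro z hz
    rcases Sym2.mem_iff.mp hz with rfl | rfl
    exacts [hca, hcb]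
  have hadjH : ∀ a b : V, H.Adj a b ↔ s(a,b) ∈ F ∪ S ∧ a ≠ b := by
    intro a b
    rw [hHdef]
    simp only [SimpleGraph.fromEdgeSet_adj, Set.mem_union]
  -- the covering claim
  have cover : ∀ x : V, (∃ f ∈ F, x ∈ f) ∨ ∃ p, s(x, p) ∈ S := by
    intro x
    by_contra hc
    rw [not_or] at hc
    obtain ⟨hxF, hxS0⟩ := hc
    have hxS : ∀ p, s(x,p) ∉ S := fun p hp => hxS0 ⟨p, hp⟩
    have hxS' : ∀ f ∈ S, x ∉ f := by
      intro f hf hx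
      obtain ⟨p, rfl⟩ := Sym2.mem_iff_exists.mp hx
      exact hxS p hf
    have hNF : ∀ y ∈ G.neighborFinset x, ∃ f ∈ F, y ∈ f := by
      intro y hy
      have hadj : G.Adj x y := (G.mem_neighborFinset x y).mp hy
      have hE : s(x,y) ∈ G.edgeSet := hadj
      have hnotF : s(x,y) ∉ F := fun h => hxF ⟨_, h, Sym2.mem_mk_left x y⟩
      obtain ⟨f, hf, z, hz1, hz2⟩ := hF.2 _ hE hnotF
      rcases Sym2.mem_iff.mp hz1 with rfl | rfl
      · exact absurd ⟨f, hf, hz2⟩ hxF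
      · exact ⟨f, hf, hz2⟩
    have hNS : ∀ y : V, ∃ p : V, y ∈ G.neighborFinset x →
        (s(y,p) ∈ S ∧ ¬ (∃ f ∈ F, p ∈ f) ∧ p ≠ x) := by
      intro y
      by_cases hy : y ∈ G.neighborFinset x
      · have hadj : G.Adj x y := (G.mem_neighborFinset x y).mp hy
        have hE : s(x,y) ∈ (G.deleteEdges {e : Sym2 V | ∀ x ∈ e, ∃ f ∈ F, x ∈ f}).edgeSet := by
          rw [SimpleGraph.edgeSet_deleteEdges]
          refine ⟨hadj, ?_⟩
          intro hmem
          exact hxF (hmem x (Sym2.mem_mk_left x y))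
        have hnotS : s(x,y) ∉ S := hxS y
        obtain ⟨f, hf, z, hz1, hz2⟩ := hS.2 _ hE hnotS
        have hzy : z = y := by
          rcases Sym2.mem_iff.mp hz1 with rfl | rfl
          · exact absurd hz2 (hxS' f hf)
          · rfl
        subst hzy
        obtain ⟨p, rfl⟩ := Sym2.mem_iff_exists.mp hz2
        refine ⟨p, fun _ => ⟨hf, ?_, ?_⟩⟩
        · intro hcp
          exact hSnb z p hf (hNF z hy) hcp
        · intro hpx
          subst hpx
          exact hxS' _ hf (Sym2.mem_mk_right _ _)
      · exact ⟨x, fun h => absurd h hy⟩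
    choose φ hφ using hNS
    set A := Finset.univ.filter (fun v : V => ∃ f ∈ F, v ∈ f) with hA
    set B := Finset.univ.filter (fun v : V => ¬ ∃ f ∈ F, v ∈ f) with hB
    have hNA : G.neighborFinset x ⊆ A := fun y hy =>
      Finset.mem_filter.mpr ⟨Finset.mem_univ _, hNF y hy⟩
    have hmaps : ∀ y ∈ G.neighborFinset x, φ y ∈ B.erase x := by
      intro y hy
      obtain ⟨h1, h2, h3⟩ := hφ y hy
      exact Finset.mem_erase.mpr ⟨h3, Finset.mem_filter.mpr ⟨Finset.mem_univ _, h2⟩⟩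
    have hinj : Set.InjOn φ (G.neighborFinset x : Set V) := by
      intro y1 hy1 y2 hy2 heq
      obtain ⟨h11, h12, _⟩ := hφ y1 (Finset.mem_coe.mp hy1)
      obtain ⟨h21, h22, _⟩ := hφ y2 (Finset.mem_coe.mp hy2)
      rw [heq] at h11
      have he := hSu _ h11 _ h21 (φ y2) (Sym2.mem_mk_right _ _) (Sym2.mem_mk_right _ _)
      rcases Sym2.eq_iff.mp he with ⟨h, _⟩ | ⟨h, _⟩
      · exact h
      · exact absurd (h ▸ hNF y1 (Finset.mem_coe.mp hy1)) h22
    have h1 : (G.neighborFinset x).card ≤ A.card := Finset.card_le_card hNA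
    have h2 : (G.neighborFinset x).card ≤ (B.erase x).card :=
      Finset.card_le_card_of_injOn φ hmaps hinj
    have hxB : x ∈ B := Finset.mem_filter.mpr ⟨Finset.mem_univ _, hxF⟩
    have h3 : (B.erase x).card = B.card - 1 := Finset.card_erase_of_mem hxB
    have h4 : 1 ≤ B.card := Finset.card_pos.mpr ⟨x, hxB⟩
    have h5 : A.card + B.card = Fintype.card V := by
      rw [hA, hB]
      rw [Finset.card_filter_add_card_filter_not, Finset.card_univ]
    have h6 := hDirac x
    have h7 : G.degree x = (G.neighborFinset x).card := rfl
    omega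
  have part1 : ∀ x : V, ∃ e ∈ F ∪ S, x ∈ e := by
    intro x
    rcases cover x with ⟨f, hf, hxf⟩ | ⟨p, hp⟩
    · exact ⟨f, Or.inl hf, hxf⟩
    · exact ⟨s(x,p), Or.inr hp, Sym2.mem_mk_left _ _⟩
  refine ⟨part1, ?_⟩
  -- closure of the component set of an F-edge
  have Tclosed : ∀ u v : V, s(u,v) ∈ F → ∀ a b : V,
      (a = u ∨ a = v ∨ s(u,a) ∈ S ∨ s(v,a) ∈ S) → H.Adj a b →
      (b = u ∨ b = v ∨ s(u,b) ∈ S ∨ s(v,b) ∈ S) := by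
    intro u v huv a b ha hab
    obtain ⟨habm, habne⟩ := (hadjH a b).mp hab
    have huvne : u ≠ v := hne u v (Or.inl huv)
    rcases ha with rfl | rfl | hSa | hSa
    · rcases habm with hmF | hmS
      · have heq := hFu _ hmF _ huv a (Sym2.mem_mk_left _ _) (Sym2.mem_mk_left _ _)
        exact Or.inr (Or.inl (Sym2.congr_right.mp heq))
      · exact Or.inr (Or.inr (Or.inl hmS))
    · rcases habm with hmF | hmS
      · have heq := hFu _ hmF _ huv a (Sym2.mem_mk_left _ _) (Sym2.mem_mk_right _ _)
        rcases Sym2.eq_iff.mp heq with ⟨_, h2⟩ | ⟨_, h2⟩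
        · exact Or.inr (Or.inl h2)
        · exact Or.inl h2
      · exact Or.inr (Or.inr (Or.inr hmS))
    · -- s(u,a) ∈ S
      rcases habm with hmF | hmS
      · exact absurd ⟨_, hmF, Sym2.mem_mk_left a b⟩
          (fun hc => hSnb u a hSa ⟨_, huv, Sym2.mem_mk_left u v⟩ hc)
      · have heq := hSu _ hmS _ hSa a (Sym2.mem_mk_left _ _) (Sym2.mem_mk_right _ _)
        rcases Sym2.eq_iff.mp heq with ⟨h1, h2⟩ | ⟨h1, h2⟩
        · exact Or.inl (h2 ▸ h1)
        · exact Or.inl h2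
    · -- s(v,a) ∈ S
      rcases habm with hmF | hmS
      · exact absurd ⟨_, hmF, Sym2.mem_mk_left a b⟩
          (fun hc => hSnb v a hSa ⟨_, huv, Sym2.mem_mk_right u v⟩ hc)
      · have heq := hSu _ hmS _ hSa a (Sym2.mem_mk_left _ _) (Sym2.mem_mk_right _ _)
        rcases Sym2.eq_iff.mp heq with ⟨h1, h2⟩ | ⟨h1, h2⟩
        · exact Or.inr (Or.inl (h2 ▸ h1))
        · exact Or.inr (Or.inl h2)
  have finish : ∀ u v : V, s(u,v) ∈ F → ∀ (a c : V) (w : H.Walk a c),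
      (∀ y, y ∈ w.support ↔ (y = u ∨ y = v ∨ s(u,y) ∈ S ∨ s(v,y) ∈ S)) →
      (∀ y, y ∈ w.support ↔ H.Reachable u y) := by
    intro u v huv a c w hsup y
    constructor
    · intro hy
      exact support_reach w ((hsup u).mpr (Or.inl rfl)) hy
    · intro hr
      obtain ⟨wk⟩ := hr
      refine (hsup y).mpr ?_
      exact walk_closed_aux (T := {z : V | z = u ∨ z = v ∨ s(u,z) ∈ S ∨ s(v,z) ∈ S})
        (fun a' ha' b' hb' => Tclosed u v huv a' b' ha' hb') wk (Or.inl rfl)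
  intro x
  obtain ⟨u, v, huv, hxu⟩ : ∃ u v : V, s(u,v) ∈ F ∧ H.Reachable x u := by
    by_cases hxF : ∃ f ∈ F, x ∈ f
    · obtain ⟨f, hf, hxf⟩ := hxF
      obtain ⟨v, rfl⟩ := Sym2.mem_iff_exists.mp hxf
      exact ⟨x, v, hf, SimpleGraph.Reachable.refl x⟩
    · rcases cover x with h | ⟨p, hp⟩
      · exact absurd h hxF
      · have hpF : ∃ f ∈ F, p ∈ f := by
          have hE : s(x,p) ∈ G.edgeSet := (hSsub' _ hp).1
          by_cases hin : s(x,p) ∈ F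
          · exact absurd ⟨_, hin, Sym2.mem_mk_left _ _⟩ hxF
          · obtain ⟨f, hf, z, hz1, hz2⟩ := hF.2 _ hE hin
            rcases Sym2.mem_iff.mp hz1 with rfl | rfl
            · exact absurd ⟨f, hf, hz2⟩ hxF
            · exact ⟨f, hf, hz2⟩
        obtain ⟨f, hf, hpf⟩ := hpF
        obtain ⟨v, rfl⟩ := Sym2.mem_iff_exists.mp hpf
        have hxp : H.Adj x p := (hadjH x p).mpr ⟨Or.inr hp, hne x p (Or.inr hp)⟩
        exact ⟨p, v, hf, hxp.reachable⟩
  have main : ∀ (a c : V) (w : H.Walk a c), w.IsPath →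
      (∀ y, y ∈ w.support ↔ (y = u ∨ y = v ∨ s(u,y) ∈ S ∨ s(v,y) ∈ S)) →
      2 ≤ w.support.length → w.support.length ≤ 4 →
      ∃ (a c : V) (w : H.Walk a c), w.IsPath ∧
        (∀ y, y ∈ w.support ↔ H.Reachable x y) ∧
        2 ≤ w.support.length ∧ w.support.length ≤ 4 := by
    intro a c w hw hsup hl1 hl2
    refine ⟨a, c, w, hw, ?_, hl1, hl2⟩
    intro y
    have hiff := finish u v huv a c w hsup
    constructor
    · intro hy
      exact hxu.trans ((hiff y).mp hy)
    · intro hr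
      exact (hiff y).mpr (hxu.symm.trans hr)
  have huvne : u ≠ v := hne u v (Or.inl huv)
  have hFcu : ∃ f ∈ F, u ∈ f := ⟨_, huv, Sym2.mem_mk_left _ _⟩
  have hFcv : ∃ f ∈ F, v ∈ f := ⟨_, huv, Sym2.mem_mk_right _ _⟩
  have a2 : H.Adj u v := (hadjH u v).mpr ⟨Or.inl huv, huvne⟩
  by_cases hpu : ∃ p, s(u,p) ∈ S
  · obtain ⟨p, hp⟩ := hpu
    have hpu' : p ≠ u := (hne u p (Or.inr hp)).symm
    have hnFp : ¬ ∃ f ∈ F, p ∈ f := fun hc => hSnb u p hp hFcu hc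
    have hpv : p ≠ v := fun h => hnFp (h ▸ hFcv)
    have a1 : H.Adj p u := (hadjH p u).mpr ⟨Or.inr (by rwa [Sym2.eq_swap]), hpu'⟩
    by_cases hqv : ∃ q, s(v,q) ∈ S
    · -- path p - u - v - q
      obtain ⟨q, hq⟩ := hqv
      have hqv' : q ≠ v := (hne v q (Or.inr hq)).symm
      have hnFq : ¬ ∃ f ∈ F, q ∈ f := fun hc => hSnb v q hq hFcv hc
      have hqu : q ≠ u := fun h => hnFq (h ▸ hFcu)
      have hpq : p ≠ q := by
        intro h
        subst h
        have he := hSu _ hp _ hq p (Sym2.mem_mk_right _ _) (Sym2.mem_mk_right _ _)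
        rcases Sym2.eq_iff.mp he with ⟨h1, _⟩ | ⟨_, h2⟩
        · exact huvne h1
        · exact hpv h2
      have a3 : H.Adj v q := (hadjH v q).mpr ⟨Or.inr hq, hne v q (Or.inr hq)⟩
      refine main p q
        (SimpleGraph.Walk.cons a1 (SimpleGraph.Walk.cons a2
          (SimpleGraph.Walk.cons a3 SimpleGraph.Walk.nil))) ?_ ?_ ?_ ?_
      · rw [SimpleGraph.Walk.isPath_def]
        simp [hpu', hpv, hpq, huvne, hqu.symm, hqv'.symm, Ne.symm hqu]
      · intro y
        simp only [SimpleGraph.Walk.support_cons, SimpleGraph.Walk.support_nil,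
          List.mem_cons, List.not_mem_nil, or_false, List.mem_singleton]
        constructor
        · rintro (rfl | rfl | rfl | rfl)
          · exact Or.inr (Or.inr (Or.inl hp))
          · exact Or.inl rfl
          · exact Or.inr (Or.inl rfl)
          · exact Or.inr (Or.inr (Or.inr hq))
        · rintro (rfl | rfl | hSy | hSy)
          · exact Or.inr (Or.inl rfl)
          · exact Or.inr (Or.inr (Or.inl rfl))
          · have he := hSu _ hSy _ hp u (Sym2.mem_mk_left _ _) (Sym2.mem_mk_left _ _)
            exact Or.inl (Sym2.congr_right.mp he)
          · have he := hSu _ hSy _ hq v (Sym2.mem_mk_left _ _) (Sym2.mem_mk_left _ _)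
            exact Or.inr (Or.inr (Or.inr (Sym2.congr_right.mp he)))
      · simp [SimpleGraph.Walk.support_cons, SimpleGraph.Walk.support_nil]
      · simp [SimpleGraph.Walk.support_cons, SimpleGraph.Walk.support_nil]
    · -- path p - u - v
      push_neg at hqv
      refine main p v
        (SimpleGraph.Walk.cons a1 (SimpleGraph.Walk.cons a2 SimpleGraph.Walk.nil)) ?_ ?_ ?_ ?_
      · rw [SimpleGraph.Walk.isPath_def]
        simp [hpu', hpv, huvne]
      · intro y
        simp only [SimpleGraph.Walk.support_cons, SimpleGraph.Walk.support_nil,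
          List.mem_cons, List.not_mem_nil, or_false, List.mem_singleton]
        constructor
        · rintro (rfl | rfl | rfl)
          · exact Or.inr (Or.inr (Or.inl hp))
          · exact Or.inl rfl
          · exact Or.inr (Or.inl rfl)
        · rintro (rfl | rfl | hSy | hSy)
          · exact Or.inr (Or.inl rfl)
          · exact Or.inr (Or.inr rfl)
          · have he := hSu _ hSy _ hp u (Sym2.mem_mk_left _ _) (Sym2.mem_mk_left _ _)
            exact Or.inl (Sym2.congr_right.mp he)
          · exact absurd hSy (hqv y)
      · simp [SimpleGraph.Walk.support_cons, SimpleGraph.Walk.support_nil]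
      · simp [SimpleGraph.Walk.support_cons, SimpleGraph.Walk.support_nil]
  · push_neg at hpu
    by_cases hqv : ∃ q, s(v,q) ∈ S
    · -- path u - v - q
      obtain ⟨q, hq⟩ := hqv
      have hqv' : q ≠ v := (hne v q (Or.inr hq)).symm
      have hnFq : ¬ ∃ f ∈ F, q ∈ f := fun hc => hSnb v q hq hFcv hc
      have hqu : q ≠ u := fun h => hnFq (h ▸ hFcu)
      have a3 : H.Adj v q := (hadjH v q).mpr ⟨Or.inr hq, hne v q (Or.inr hq)⟩
      refine main u q
        (SimpleGraph.Walk.cons a2 (SimpleGraph.Walk.cons a3 SimpleGraph.Walk.nil)) ?_ ?_ ?_ ?_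
      · rw [SimpleGraph.Walk.isPath_def]
        simp [huvne, Ne.symm hqu, Ne.symm hqv']
      · intro y
        simp only [SimpleGraph.Walk.support_cons, SimpleGraph.Walk.support_nil,
          List.mem_cons, List.not_mem_nil, or_false, List.mem_singleton]
        constructor
        · rintro (rfl | rfl | rfl)
          · exact Or.inl rfl
          · exact Or.inr (Or.inl rfl)
          · exact Or.inr (Or.inr (Or.inr hq))
        · rintro (rfl | rfl | hSy | hSy)
          · exact Or.inl rfl
          · exact Or.inr (Or.inl rfl)
          · exact absurd hSy (hpu y)
          · have he := hSu _ hSy _ hq v (Sym2.mem_mk_left _ _) (Sym2.mem_mk_left _ _)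
            exact Or.inr (Or.inr (Sym2.congr_right.mp he))
      · simp [SimpleGraph.Walk.support_cons, SimpleGraph.Walk.support_nil]
      · simp [SimpleGraph.Walk.support_cons, SimpleGraph.Walk.support_nil]
    · -- path u - v
      push_neg at hqv
      refine main u v (SimpleGraph.Walk.cons a2 SimpleGraph.Walk.nil) ?_ ?_ ?_ ?_
      · rw [SimpleGraph.Walk.isPath_def]
        simp [huvne]
      · intro y
        simp only [SimpleGraph.Walk.support_cons, SimpleGraph.Walk.support_nil,
          List.mem_cons, List.not_mem_nil, or_false, List.mem_singleton]
        constructor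
        · rintro (rfl | rfl)
          · exact Or.inl rfl
          · exact Or.inr (Or.inl rfl)
        · rintro (rfl | rfl | hSy | hSy)
          · exact Or.inl rfl
          · exact Or.inr rfl
          · exact absurd hSy (hpu y)
          · exact absurd hSy (hqv y)
      · simp [SimpleGraph.Walk.support_cons, SimpleGraph.Walk.support_nil]
      · simp [SimpleGraph.Walk.support_cons, SimpleGraph.Walk.support_nil]
end

section
/- Let G be a finite simple graph on n ≥ 3 vertices that contains a Hamiltonian path with endpoints u and v. If d(u) + d(v) ≥ n, where d denotes degree in G, then G contains a Hamiltonian cycle. -/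
open SimpleGraph Finset

namespace Stmt8Aux

variable {V : Type*} {G : SimpleGraph V}

/-- getVert is injective (within the length range) on walks with nodup support. -/
lemma getVert_injOn : ∀ {u v : V} (p : G.Walk u v), p.support.Nodup →
    ∀ {i j : ℕ}, i ≤ p.length → j ≤ p.length → p.getVert i = p.getVert j → i = j
  | u, _, SimpleGraph.Walk.nil, _, i, j, hi, hj, _ => by
      simp only [SimpleGraph.Walk.length_nil, Nat.le_zero] at hi hj; omega
  | u, v, SimpleGraph.Walk.cons h q, hnd, i, j, hi, hj, hij => by
      simp only [SimpleGraph.Walk.support_cons, List.nodup_cons] at hnd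
      obtain ⟨hu, hq⟩ := hnd
      match i, j with
      | 0, 0 => rfl
      | 0, j + 1 =>
          exfalso
          apply hu
          rw [SimpleGraph.Walk.mem_support_iff_exists_getVert]
          exact ⟨j, hij.symm, by simpa [SimpleGraph.Walk.length_cons] using hj⟩
      | i + 1, 0 =>
          exfalso
          apply hu
          rw [SimpleGraph.Walk.mem_support_iff_exists_getVert]
          exact ⟨i, hij, by simpa [SimpleGraph.Walk.length_cons] using hi⟩
      | i + 1, j + 1 =>
          have := getVert_injOn q hq (i := i) (j := j)
            (by simpa [SimpleGraph.Walk.length_cons] using hi)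
            (by simpa [SimpleGraph.Walk.length_cons] using hj) hij
          omega

/-- If a walk with nodup support contains the edge between its endpoints, it has length 1. -/
lemma length_eq_one_of_endpoints_edge : ∀ {x y : V} (p : G.Walk x y),
    p.support.Nodup → s(x, y) ∈ p.edges → p.length = 1
  | x, _, SimpleGraph.Walk.nil, _, he => by simp at he
  | x, y, SimpleGraph.Walk.cons h q, hnd, he => by
      simp only [SimpleGraph.Walk.support_cons, List.nodup_cons] at hnd
      obtain ⟨hx, hq⟩ := hnd
      rw [SimpleGraph.Walk.edges_cons, List.mem_cons] at he
      rcases he with he | he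
      · rw [Sym2.eq_iff] at he
        rcases he with ⟨-, rfl⟩ | ⟨he1, rfl⟩
        · -- q : Walk y y with nodup support, so it is nil
          cases q with
          | nil => simp
          | cons h' q' =>
              exfalso
              simp only [SimpleGraph.Walk.support_cons, List.nodup_cons] at hq
              exact hq.1 q'.end_mem_support
        · exact absurd he1 h.ne
      · exact absurd (SimpleGraph.Walk.fst_mem_support_of_mem_edges q he) hx

/-- Split a walk at position `i < length` into the part before `i`, the `i`-th edge, and the
part after `i+1`. -/
lemma split_at : ∀ {u v : V} (p : G.Walk u v) (i : ℕ), i < p.length →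
    ∃ (p1 : G.Walk u (p.getVert i)) (h : G.Adj (p.getVert i) (p.getVert (i + 1)))
      (p2 : G.Walk (p.getVert (i + 1)) v),
      p = p1.append (SimpleGraph.Walk.cons h p2) ∧ p1.length = i ∧ p2.length + i + 1 = p.length
  | u, _, SimpleGraph.Walk.nil, i, hi => by simp at hi
  | u, v, SimpleGraph.Walk.cons h q, 0, hi => by
      have key : ∀ {x : V}, x = q.getVert 0 → ∃ (h' : G.Adj u x)
          (q' : G.Walk x v), SimpleGraph.Walk.cons h q = SimpleGraph.Walk.cons h' q' ∧
            q'.length = q.length := by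
        intro x e
        rw [q.getVert_zero] at e
        subst e
        exact ⟨h, q, rfl, rfl⟩
      obtain ⟨h', q', hq, hlen⟩ := key rfl
      exact ⟨SimpleGraph.Walk.nil, h', q', by exact hq, rfl,
        by simp [SimpleGraph.Walk.length_cons, hlen]⟩
  | u, v, SimpleGraph.Walk.cons h q, i + 1, hi => by
      have hi' : i < q.length := by simpa [SimpleGraph.Walk.length_cons] using hi
      obtain ⟨q1, hadj, q2, heq, hlen, hlen2⟩ := split_at q i hi'
      refine ⟨SimpleGraph.Walk.cons h q1, hadj, q2, ?_, ?_, ?_⟩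
      · exact congrArg (SimpleGraph.Walk.cons h) heq
      · simp [SimpleGraph.Walk.length_cons, hlen]
      · simp [SimpleGraph.Walk.length_cons]; omega

end Stmt8Aux

/-- Let `G` be a finite simple graph on `n ≥ 3` vertices containing a Hamiltonian path with
endpoints `u` and `v`.  If `d(u) + d(v) ≥ n`, then `G` contains a Hamiltonian cycle. -/
theorem stmt8 {V : Type*} [Fintype V] [DecidableEq V]
    (G : SimpleGraph V) [DecidableRel G.Adj]
    (h3 : 3 ≤ Fintype.card V)
    {u v : V} (p : G.Walk u v) (hp : p.IsHamiltonian)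
    (hd : Fintype.card V ≤ G.degree u + G.degree v) :
    ∃ (a : V) (c : G.Walk a a), c.IsHamiltonianCycle := by
  classical
  set n := Fintype.card V with hn
  have hnd : p.support.Nodup := hp.isPath.support_nodup
  have hL : p.length = n - 1 := hp.length_eq
  have hL2 : 2 ≤ p.length := by omega
  have hinj : ∀ {i j : ℕ}, i ≤ p.length → j ≤ p.length → p.getVert i = p.getVert j → i = j :=
    fun hi hj h => Stmt8Aux.getVert_injOn p hnd hi hj h
  -- the two finsets of indices
  set A : Finset ℕ := (Finset.range p.length).filter (fun i => G.Adj u (p.getVert (i + 1)))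
    with hA
  set B : Finset ℕ := (Finset.range p.length).filter (fun i => G.Adj v (p.getVert i)) with hB
  have hcardA : A.card = G.degree u := by
    rw [SimpleGraph.degree]
    apply Finset.card_bij (fun i _ => p.getVert (i + 1))
    · intro a ha
      rw [hA, Finset.mem_filter] at ha
      exact (SimpleGraph.mem_neighborFinset _ _ _).2 ha.2
    · intro a ha b hb hab
      rw [hA, Finset.mem_filter, Finset.mem_range] at ha hb
      have := hinj (i := a + 1) (j := b + 1) (by omega) (by omega) hab
      omega
    · intro y hy
      rw [SimpleGraph.mem_neighborFinset] at hy
      have hmem : y ∈ p.support := hp.mem_support y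
      rw [SimpleGraph.Walk.mem_support_iff_exists_getVert] at hmem
      obtain ⟨m, hm, hmle⟩ := hmem
      have hm0 : m ≠ 0 := by
        rintro rfl
        rw [p.getVert_zero] at hm
        exact hy.ne hm
      obtain ⟨k, rfl⟩ := Nat.exists_eq_succ_of_ne_zero hm0
      refine ⟨k, ?_, hm⟩
      rw [hA, Finset.mem_filter, Finset.mem_range]
      exact ⟨by omega, by rw [hm]; exact hy⟩
  have hcardB : B.card = G.degree v := by
    rw [SimpleGraph.degree]
    apply Finset.card_bij (fun i _ => p.getVert i)
    · intro a ha
      rw [hB, Finset.mem_filter] at ha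
      exact (SimpleGraph.mem_neighborFinset _ _ _).2 ha.2
    · intro a ha b hb hab
      rw [hB, Finset.mem_filter, Finset.mem_range] at ha hb
      exact hinj (by omega) (by omega) hab
    · intro y hy
      rw [SimpleGraph.mem_neighborFinset] at hy
      have hmem : y ∈ p.support := hp.mem_support y
      rw [SimpleGraph.Walk.mem_support_iff_exists_getVert] at hmem
      obtain ⟨m, hm, hmle⟩ := hmem
      have hmL : m ≠ p.length := by
        rintro rfl
        rw [p.getVert_length] at hm
        exact hy.ne hm
      refine ⟨m, ?_, hm⟩
      rw [hB, Finset.mem_filter, Finset.mem_range]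
      exact ⟨by omega, by rw [hm]; exact hy⟩
  -- A and B intersect
  have hABsub : A ∪ B ⊆ Finset.range p.length := by
    intro x hx
    rcases Finset.mem_union.1 hx with hx | hx
    · exact Finset.mem_of_mem_filter x hx
    · exact Finset.mem_of_mem_filter x hx
  have hunion : (A ∪ B).card ≤ p.length := by
    simpa using Finset.card_le_card hABsub
  have hsum : A.card + B.card = (A ∪ B).card + (A ∩ B).card :=
    (Finset.card_union_add_card_inter A B).symm
  have hineq : 0 < (A ∩ B).card := by
    rw [hcardA, hcardB] at hsum
    omega
  obtain ⟨i, hi⟩ := Finset.card_pos.1 hineq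
  rw [Finset.mem_inter, hA, hB, Finset.mem_filter, Finset.mem_filter, Finset.mem_range] at hi
  obtain ⟨⟨hiL, hub⟩, -, hva⟩ := hi
  -- split the path at position i
  obtain ⟨p1, hadj, p2, heq, hlen1, hlen2⟩ := Stmt8Aux.split_at p i hiL
  -- the rotated walk
  set w : G.Walk u (p.getVert (i + 1)) :=
    p1.append (SimpleGraph.Walk.cons hva.symm p2.reverse) with hw
  have hwsupp : w.support = p1.support ++ p2.support.reverse := by
    rw [hw, SimpleGraph.Walk.support_append, SimpleGraph.Walk.support_cons, List.tail_cons,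
      SimpleGraph.Walk.support_reverse]
  have hpsupp : p.support = p1.support ++ p2.support := by
    have h2 := congrArg SimpleGraph.Walk.support heq
    rwa [SimpleGraph.Walk.support_append, SimpleGraph.Walk.support_cons, List.tail_cons] at h2
  have hperm : w.support.Perm p.support := by
    rw [hwsupp, hpsupp]
    exact (p2.support.reverse_perm).append_left p1.support
  have hwnd : w.support.Nodup := hperm.nodup_iff.2 hnd
  have hwlen : w.length = p.length := by
    rw [hw, SimpleGraph.Walk.length_append, SimpleGraph.Walk.length_cons,
      SimpleGraph.Walk.length_reverse]
    omega
  -- the Hamiltonian cycle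
  refine ⟨p.getVert (i + 1), SimpleGraph.Walk.cons hub.symm w, ?_⟩
  rw [SimpleGraph.Walk.isHamiltonianCycle_isCycle_and_isHamiltonian_tail]
  constructor
  · rw [SimpleGraph.Walk.cons_isCycle_iff]
    refine ⟨SimpleGraph.Walk.IsPath.mk' hwnd, fun hmem => ?_⟩
    have := Stmt8Aux.length_eq_one_of_endpoints_edge w hwnd (by rwa [Sym2.eq_swap])
    omega
  · rw [SimpleGraph.Walk.tail_cons]
    intro x
    refine (congrArg (List.count x) (SimpleGraph.Walk.support_copy w _ _)).trans ((hperm.count_eq x).trans ?_)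
    exact hp x
end

section
/- Let G be an RK graph on n vertices and let v* be a vertex of G with d(v*) < n/2. Then every vertex of G is at distance at most 4 from v*. -/
/-- An RK (Rahman–Kaykobad) graph: a connected finite simple graph on `n` vertices such that
for every pair of distinct nonadjacent vertices `u, v` it holds that
`d(u) + d(v) + δ(u, v) ≥ n + 1`. -/
def IsRKGraph {V : Type*} [Fintype V] (G : SimpleGraph V) [DecidableRel G.Adj] : Prop :=
  G.Connected ∧ ∀ u v : V, u ≠ v → ¬ G.Adj u v →
    Fintype.card V + 1 ≤ G.degree u + G.degree v + G.dist u v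

private lemma walk_drop_length {V : Type*} {G : SimpleGraph V} :
    ∀ {u v : V} (p : G.Walk u v) (n : ℕ), (p.drop n).length = p.length - n := by
  intro u v p
  induction p with
  | nil => intro n; cases n <;> simp [SimpleGraph.Walk.drop]
  | cons h q ih =>
    intro n
    cases n with
    | zero => simp [SimpleGraph.Walk.drop]
    | succ m => simpa [SimpleGraph.Walk.drop] using ih m

/-- On a geodesic from `u` to `v`, for each `j ≤ dist u v` there is a vertex at distance
exactly `j` from `u` and `dist u v - j` from `v`. -/
private lemma exists_mid {V : Type*} {G : SimpleGraph V} (hconn : G.Connected)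
    (u v : V) (j : ℕ) (hj : j ≤ G.dist u v) :
    ∃ x : V, G.dist u x = j ∧ G.dist x v = G.dist u v - j := by
  obtain ⟨p, hp⟩ := (hconn u v).exists_walk_length_eq_dist
  set k := G.dist u v with hk
  refine ⟨p.getVert j, ?_⟩
  -- walk from getVert j to v of length k - j
  have h2 : G.dist (p.getVert j) v ≤ k - j := by
    have := G.dist_le (p.drop j)
    rwa [walk_drop_length, hp] at this
  -- walk from getVert j to u of length j, via the reverse walk
  have h1 : G.dist u (p.getVert j) ≤ j := by
    have hrev : p.reverse.getVert (k - j) = p.getVert j := by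
      rw [SimpleGraph.Walk.getVert_reverse, hp]
      congr 1
      omega
    have := G.dist_le ((p.reverse.drop (k - j)).copy hrev rfl)
    rw [SimpleGraph.Walk.length_copy, walk_drop_length,
      SimpleGraph.Walk.length_reverse, hp] at this
    rw [SimpleGraph.dist_comm]
    omega
  have htri : k ≤ G.dist u (p.getVert j) + G.dist (p.getVert j) v :=
    hconn.dist_triangle
  omega

/-- If two vertices are at distance at least 3, their closed neighborhoods are disjoint. -/
private lemma far_deg {V : Type*} [Fintype V] (G : SimpleGraph V) [DecidableRel G.Adj]
    (hconn : G.Connected) {a b : V} (h3 : 3 ≤ G.dist a b) :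
    G.degree a + G.degree b + 2 ≤ Fintype.card V := by
  classical
  set A := insert a (G.neighborFinset a) with hA
  set B := insert b (G.neighborFinset b) with hB
  have hdisj : Disjoint A B := by
    rw [Finset.disjoint_left]
    intro w hwA hwB
    have hwa : w = a ∨ G.Adj a w := by
      rcases Finset.mem_insert.mp hwA with h | h
      · exact Or.inl h
      · exact Or.inr (G.mem_neighborFinset a w |>.mp h)
    have hwb : w = b ∨ G.Adj b w := by
      rcases Finset.mem_insert.mp hwB with h | h
      · exact Or.inl h
      · exact Or.inr (G.mem_neighborFinset b w |>.mp h)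
    rcases hwa with h | h
    · rcases hwb with h' | h'
      · have hab : a = b := h.symm.trans h'
        rw [hab, SimpleGraph.dist_self] at h3
        omega
      · have : G.dist a b = 1 :=
          SimpleGraph.dist_eq_one_iff_adj.mpr ((h ▸ h') : G.Adj b a).symm
        omega
    · rcases hwb with h' | h'
      · have : G.dist a b = 1 :=
          SimpleGraph.dist_eq_one_iff_adj.mpr (h' ▸ h : G.Adj a b)
        omega
      · have h1 : G.dist a w = 1 := SimpleGraph.dist_eq_one_iff_adj.mpr h
        have h2 : G.dist w b = 1 := SimpleGraph.dist_eq_one_iff_adj.mpr h'.symm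
        have := hconn.dist_triangle (u := a) (v := w) (w := b)
        omega
  have hcardA : A.card = G.degree a + 1 := by
    rw [hA, Finset.card_insert_of_notMem (G.notMem_neighborFinset_self a),
      G.card_neighborFinset_eq_degree]
  have hcardB : B.card = G.degree b + 1 := by
    rw [hB, Finset.card_insert_of_notMem (G.notMem_neighborFinset_self b),
      G.card_neighborFinset_eq_degree]
  have := Finset.card_le_univ (A ∪ B)
  rw [Finset.card_union_of_disjoint hdisj, hcardA, hcardB] at this
  omega

/-- Distance at least 2 implies distinct and nonadjacent. -/
private lemma ne_and_not_adj {V : Type*} {G : SimpleGraph V} {a b : V}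
    (h : 2 ≤ G.dist a b) : a ≠ b ∧ ¬ G.Adj a b := by
  constructor
  · rintro rfl; simp [SimpleGraph.dist_self] at h
  · intro hadj
    have : G.dist a b = 1 := SimpleGraph.dist_eq_one_iff_adj.mpr hadj
    omega

/-- In an RK graph on `n` vertices, if `v*` has degree less than `n / 2`, then every vertex
is at distance at most `4` from `v*`. -/
theorem stmt10 {V : Type*} [Fintype V] (G : SimpleGraph V) [DecidableRel G.Adj]
    (hRK : IsRKGraph G) (vstar : V)
    (hv : 2 * G.degree vstar < Fintype.card V) :
    ∀ u : V, G.dist u vstar ≤ 4 := by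
  obtain ⟨hconn, hineq⟩ := hRK
  intro u
  by_contra hcon
  push_neg at hcon
  set k := G.dist u vstar with hk
  have hk5 : 5 ≤ k := hcon
  -- y at distance 2 from u, k-2 from vstar
  obtain ⟨y, hy1, hy2⟩ := exists_mid hconn u vstar 2 (by omega)
  -- x at distance k-2 from u, 2 from vstar
  obtain ⟨x, hx1, hx2⟩ := exists_mid hconn u vstar (k - 2) (by omega)
  have hx2' : G.dist x vstar = 2 := by rw [← hk] at hx2; omega
  -- RK for (x, vstar)
  have hxv := ne_and_not_adj (G := G) (a := x) (b := vstar) (by omega)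
  have h1 := hineq x vstar hxv.1 hxv.2
  rw [hx2'] at h1
  -- RK for (u, y)
  have huy := ne_and_not_adj (G := G) (a := u) (b := y) (by omega)
  have h3 := hineq u y huy.1 huy.2
  rw [hy1] at h3
  -- closed neighborhoods of u,x disjoint
  have h2 := far_deg G hconn (a := u) (b := x) (by omega)
  -- closed neighborhoods of y,vstar disjoint
  have h4 := far_deg G hconn (a := y) (b := vstar) (by omega)
  omega
end

section
/- Let G be an RK graph on n vertices and let v* be a vertex of G with d(v*) < n/2. Define B = {u : δ(u, v*) = 2}, C = {u : δ(u, v*) = 3}, and D = {u : δ(u, v*) = 4}. If D ≠ ∅, then |B| = 1, any two distinct vertices of D are adjacent, and every vertex of C is adjacent to every vertex of D. -/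
open SimpleGraph Finset


lemma aux_step {V : Type*} (G : SimpleGraph V) (hc : G.Connected) (u v : V) (n : ℕ)
    (h : G.dist u v = n + 1) : ∃ w, G.Adj u w ∧ G.dist w v = n := by
  obtain ⟨p, hp⟩ := (hc u v).exists_walk_length_eq_dist
  rw [h] at hp
  cases p with
  | nil => simp at hp
  | cons hadj q =>
    rename_i w
    refine ⟨w, hadj, le_antisymm ?_ ?_⟩
    · have := G.dist_le q
      simp only [SimpleGraph.Walk.length_cons, Nat.add_right_cancel_iff] at hp
      omega
    · have h1 : G.dist u w ≤ 1 := by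
        simpa using G.dist_le (SimpleGraph.Walk.cons hadj SimpleGraph.Walk.nil)
      have := hc.dist_triangle (u := u) (v := w) (w := v)
      omega

lemma aux_count {V : Type*} [Fintype V] (G : SimpleGraph V) [DecidableRel G.Adj]
    (hc : G.Connected) (vstar u : V) (hu : G.dist u vstar = 4)
    (hRK2 : ∀ u v : V, u ≠ v → ¬ G.Adj u v →
      Fintype.card V + 1 ≤ G.degree u + G.degree v + G.dist u v) :
    (univ.filter (fun w => G.dist w vstar = 2)).card ≤ 1 ∧
    ((univ.filter (fun w => G.dist w vstar = 2)).card = 1 →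
      ∀ w : V, w ≠ u → 3 ≤ G.dist w vstar → G.Adj u w) := by
  classical
  set n := Fintype.card V with hn
  set B := univ.filter (fun w => G.dist w vstar = 2) with hB
  set P := univ.filter (fun w => G.dist w vstar ≤ 2) with hP
  set R := univ.filter (fun w => ¬ G.dist w vstar ≤ 2) with hR
  set Q := R.erase u with hQ
  have huv : u ≠ vstar := by
    intro h; rw [h] at hu; simp [SimpleGraph.dist_self] at hu
  have hnadj : ¬ G.Adj u vstar := by
    intro h; rw [← SimpleGraph.dist_eq_one_iff_adj] at h; omega
  have hrk : n + 1 ≤ G.degree u + G.degree vstar + 4 := by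
    have := hRK2 u vstar huv hnadj; rw [hu] at this; exact this
  have hPR : P.card + R.card = n := by
    rw [hP, hR, Finset.card_filter_add_card_filter_not, Finset.card_univ]
  have huR : u ∈ R := by
    rw [hR, Finset.mem_filter]; exact ⟨Finset.mem_univ u, by omega⟩
  have hQR : Q.card + 1 = R.card := by
    rw [hQ, Finset.card_erase_of_mem huR]
    have : 1 ≤ R.card := Finset.card_pos.mpr ⟨u, huR⟩
    omega
  have hPcard : P.card = 1 + G.degree vstar + B.card := by
    have hP' : P = univ.filter (fun w => G.dist w vstar = 0)
        ∪ univ.filter (fun w => G.dist w vstar = 1) ∪ B := by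
      rw [hP, hB, ← Finset.filter_or, ← Finset.filter_or]
      apply Finset.filter_congr; intro w _; constructor <;> (intro h; omega)
    have h0 : (univ.filter (fun w => G.dist w vstar = 0)) = {vstar} := by
      ext w
      simp only [Finset.mem_filter, Finset.mem_univ, true_and, Finset.mem_singleton]
      exact hc.dist_eq_zero_iff
    have h1 : (univ.filter (fun w => G.dist w vstar = 1)) = G.neighborFinset vstar := by
      ext w
      simp only [Finset.mem_filter, Finset.mem_univ, true_and,
        SimpleGraph.mem_neighborFinset]
      rw [SimpleGraph.dist_eq_one_iff_adj]
      exact ⟨fun h => h.symm, fun h => h.symm⟩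
    have hd01 : Disjoint (univ.filter (fun w => G.dist w vstar = 0))
        (univ.filter (fun w => G.dist w vstar = 1)) := by
      rw [Finset.disjoint_filter]; intro x _ h1 h2; omega
    have hd2 : Disjoint (univ.filter (fun w => G.dist w vstar = 0)
        ∪ univ.filter (fun w => G.dist w vstar = 1)) B := by
      rw [Finset.disjoint_union_left]
      constructor
      · rw [hB, Finset.disjoint_filter]; intro x _ h1 h2; omega
      · rw [hB, Finset.disjoint_filter]; intro x _ h1 h2; omega
    rw [hP', Finset.card_union_of_disjoint hd2, Finset.card_union_of_disjoint hd01,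
      h0, h1, Finset.card_singleton, SimpleGraph.card_neighborFinset_eq_degree]
  have hNQ : G.neighborFinset u ⊆ Q := by
    intro w hw
    rw [SimpleGraph.mem_neighborFinset] at hw
    have hwu : w ≠ u := fun h => G.loopless.irrefl u (h ▸ hw)
    have h1 : G.dist u w ≤ 1 := by
      simpa using G.dist_le (SimpleGraph.Walk.cons hw SimpleGraph.Walk.nil)
    have htri := hc.dist_triangle (u := u) (v := w) (w := vstar)
    rw [hQ]
    refine Finset.mem_erase.mpr ⟨hwu, ?_⟩
    rw [hR, Finset.mem_filter]
    exact ⟨Finset.mem_univ w, by omega⟩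
  have hdegQ : G.degree u ≤ Q.card := by
    rw [← SimpleGraph.card_neighborFinset_eq_degree]
    exact Finset.card_le_card hNQ
  constructor
  · omega
  · intro hB1 w hwu hw3
    have hQcard : Q.card ≤ G.degree u := by omega
    have heq : G.neighborFinset u = Q :=
      Finset.eq_of_subset_of_card_le hNQ (by
        rw [SimpleGraph.card_neighborFinset_eq_degree]; exact hQcard)
    have hwQ : w ∈ Q := by
      rw [hQ]
      refine Finset.mem_erase.mpr ⟨hwu, ?_⟩
      rw [hR, Finset.mem_filter]
      exact ⟨Finset.mem_univ w, by omega⟩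
    rw [← heq, SimpleGraph.mem_neighborFinset] at hwQ
    exact hwQ

/-- In an RK graph on `n` vertices with a vertex `v*` of degree less than `n / 2`, let
`B`, `C`, `D` be the sets of vertices at distance exactly `2`, `3`, `4` from `v*`.
If `D ≠ ∅`, then `|B| = 1`, any two distinct vertices of `D` are adjacent, and every
vertex of `C` is adjacent to every vertex of `D`. -/
theorem stmt11 {V : Type*} [Fintype V] (G : SimpleGraph V) [DecidableRel G.Adj]
    (hRK : IsRKGraph G) (vstar : V)
    (hv : 2 * G.degree vstar < Fintype.card V)
    (hD : ({u : V | G.dist u vstar = 4}).Nonempty) :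
    (∃ b : V, {u : V | G.dist u vstar = 2} = {b}) ∧
    (∀ x ∈ {u : V | G.dist u vstar = 4}, ∀ y ∈ {u : V | G.dist u vstar = 4},
      x ≠ y → G.Adj x y) ∧
    (∀ c ∈ {u : V | G.dist u vstar = 3}, ∀ d ∈ {u : V | G.dist u vstar = 4},
      G.Adj c d) := by
  classical
  obtain ⟨hc, hRK2⟩ := hRK
  obtain ⟨u0, hu0⟩ := hD
  simp only [Set.mem_setOf_eq] at hu0
  -- B is nonempty
  obtain ⟨w3, -, hw3⟩ := aux_step G hc u0 vstar 3 hu0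
  obtain ⟨w2, -, hw2⟩ := aux_step G hc w3 vstar 2 hw3
  have hBle := (aux_count G hc vstar u0 hu0 hRK2).1
  have hBge : 1 ≤ (univ.filter (fun w => G.dist w vstar = 2)).card :=
    Finset.card_pos.mpr ⟨w2, Finset.mem_filter.mpr ⟨Finset.mem_univ w2, hw2⟩⟩
  have hB1 : (univ.filter (fun w => G.dist w vstar = 2)).card = 1 := le_antisymm hBle hBge
  obtain ⟨b, hb⟩ := Finset.card_eq_one.mp hB1
  refine ⟨⟨b, ?_⟩, ?_, ?_⟩
  · ext w
    simp only [Set.mem_setOf_eq, Set.mem_singleton_iff]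
    constructor
    · intro h
      have : w ∈ ({b} : Finset V) := hb ▸ Finset.mem_filter.mpr ⟨Finset.mem_univ w, h⟩
      exact Finset.mem_singleton.mp this
    · intro h
      have : w ∈ univ.filter (fun w => G.dist w vstar = 2) := by
        rw [hb]; exact Finset.mem_singleton.mpr h
      exact (Finset.mem_filter.mp this).2
  · intro x hx y hy hxy
    simp only [Set.mem_setOf_eq] at hx hy
    exact (aux_count G hc vstar x hx hRK2).2 hB1 y (Ne.symm hxy) (by omega)
  · intro c hcm d hdm
    simp only [Set.mem_setOf_eq] at hcm hdm
    have hcd : c ≠ d := by intro h; rw [h, hdm] at hcm; omega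
    exact ((aux_count G hc vstar d hdm hRK2).2 hB1 c hcd (by omega)).symm
end

section
/- Let G be an RK graph on n vertices and let v* be a vertex of G with d(v*) < n/2. Define B = {u : δ(u, v*) = 2}, C = {u : δ(u, v*) = 3}, and D = {u : δ(u, v*) = 4}. If D = ∅, then for every c ∈ C the neighborhood of c in G is exactly (B ∪ C) \ {c}. -/
lemma step_down {V : Type*} (G : SimpleGraph V) (u v : V) (k : ℕ)
    (h : G.dist u v = k + 1) : ∃ w, G.Adj u w ∧ G.dist w v = k := by
  have hr : G.Reachable u v := by
    apply SimpleGraph.Reachable.of_dist_ne_zero (G := G); omega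
  obtain ⟨p, hp⟩ := hr.exists_walk_length_eq_dist
  cases p with
  | nil => simp at hp h
  | cons hadj q =>
    rename_i w
    refine ⟨w, hadj, ?_⟩
    simp only [SimpleGraph.Walk.length_cons, h] at hp
    have h1 : G.dist w v ≤ k := by
      have := SimpleGraph.dist_le q; omega
    obtain ⟨q', hq'⟩ := (SimpleGraph.Reachable.mono le_rfl ⟨q⟩).exists_walk_length_eq_dist
    have h2 : G.dist u v ≤ (SimpleGraph.Walk.cons hadj q').length :=
      SimpleGraph.dist_le _
    simp only [SimpleGraph.Walk.length_cons, hq', h] at h2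
    omega

/-- In an RK graph on `n` vertices with a vertex `v*` of degree less than `n / 2`, let
`B`, `C`, `D` be the sets of vertices at distance exactly `2`, `3`, `4` from `v*`.
If `D = ∅`, then for every `c ∈ C` the neighborhood of `c` is exactly `(B ∪ C) \ {c}`. -/
theorem stmt13 {V : Type*} [Fintype V] (G : SimpleGraph V) [DecidableRel G.Adj]
    (hRK : IsRKGraph G) (vstar : V)
    (hv : 2 * G.degree vstar < Fintype.card V)
    (hD : {u : V | G.dist u vstar = 4} = ∅) :
    ∀ c ∈ {u : V | G.dist u vstar = 3},
      G.neighborSet c =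
        ({u : V | G.dist u vstar = 2} ∪ {u : V | G.dist u vstar = 3}) \ {c} := by
  classical
  obtain ⟨hconn, hrk⟩ := hRK
  -- no vertex has distance exactly 4
  have hD' : ∀ u : V, G.dist u vstar ≠ 4 := by
    intro u hu
    have : u ∈ {u : V | G.dist u vstar = 4} := hu
    rw [hD] at this; exact this
  -- all distances are at most 3
  have hdist3 : ∀ u : V, G.dist u vstar ≤ 3 := by
    intro u
    by_contra hgt
    push_neg at hgt
    -- strong induction on the distance value
    have key : ∀ k : ℕ, ∀ u : V, G.dist u vstar = k → k ≤ 3 := by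
      intro k
      induction k using Nat.strong_induction_on with
      | _ k ih =>
        intro u hu
        by_contra hk
        push_neg at hk
        obtain ⟨k', rfl⟩ : ∃ k', k = k' + 1 := ⟨k - 1, by omega⟩
        obtain ⟨w, _, hw⟩ := step_down G u vstar k' hu
        have := ih k' (by omega) w hw
        have : k' + 1 = 4 := by omega
        exact hD' u (this ▸ hu)
    have := key (G.dist u vstar) u rfl
    omega
  intro c hc
  have hc3 : G.dist c vstar = 3 := hc
  have hcv : c ≠ vstar := by
    intro h; rw [h, SimpleGraph.dist_self] at hc3; omega
  have hncadj : ¬ G.Adj c vstar := by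
    intro h
    rw [← SimpleGraph.dist_eq_one_iff_adj] at h
    omega
  -- RK inequality for c and vstar
  have hdeg : Fintype.card V + 1 ≤ G.degree c + G.degree vstar + 3 := by
    have := hrk c vstar hcv hncadj
    rw [hc3] at this; exact this
  -- the target finset
  set F : Finset V :=
    Finset.univ \ (insert vstar (insert c (G.neighborFinset vstar))) with hF
  have hvnc : vstar ∉ insert c (G.neighborFinset vstar) := by
    simp only [Finset.mem_insert, SimpleGraph.mem_neighborFinset]
    push_neg
    exact ⟨hcv.symm, fun h => h.ne rfl⟩
  have hcn : c ∉ G.neighborFinset vstar := by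
    simp only [SimpleGraph.mem_neighborFinset]
    intro h; exact hncadj h.symm
  have hFcard : F.card = Fintype.card V - (G.degree vstar + 2) := by
    rw [hF, Finset.card_sdiff_of_subset (Finset.subset_univ _), Finset.card_univ,
      Finset.card_insert_of_notMem hvnc, Finset.card_insert_of_notMem hcn,
      SimpleGraph.card_neighborFinset_eq_degree]
  -- neighbors of c lie in F
  have hsub : G.neighborFinset c ⊆ F := by
    intro u hu
    rw [SimpleGraph.mem_neighborFinset] at hu
    have hd2 : 2 ≤ G.dist u vstar := by
      obtain ⟨p, hp⟩ := (hconn.preconnected u vstar).exists_walk_length_eq_dist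
      have : G.dist c vstar ≤ (SimpleGraph.Walk.cons hu p).length :=
        SimpleGraph.dist_le _
      simp only [SimpleGraph.Walk.length_cons, hp] at this
      omega
    simp only [hF, Finset.mem_sdiff, Finset.mem_univ, Finset.mem_insert,
      SimpleGraph.mem_neighborFinset, true_and]
    push_neg
    refine ⟨?_, ?_, ?_⟩
    · intro h; rw [h, SimpleGraph.dist_self] at hd2; omega
    · exact fun h => hu.ne (h.symm ▸ rfl) |>.elim
    · intro h
      rw [← SimpleGraph.dist_eq_one_iff_adj, SimpleGraph.dist_comm] at h
      omega
  -- cardinality forces equality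
  have hdegc : G.degree c = (G.neighborFinset c).card :=
    (SimpleGraph.card_neighborFinset_eq_degree G c).symm
  have hcard_le : F.card ≤ (G.neighborFinset c).card := by
    rw [hFcard, ← hdegc]
    omega
  have hFeq : G.neighborFinset c = F := Finset.eq_of_subset_of_card_le hsub hcard_le
  -- translate to sets
  ext u
  have hmem : u ∈ G.neighborSet c ↔ u ∈ F := by
    rw [SimpleGraph.mem_neighborSet, ← SimpleGraph.mem_neighborFinset, hFeq]
  rw [hmem]
  simp only [hF, Finset.mem_sdiff, Finset.mem_univ, Finset.mem_insert,
    SimpleGraph.mem_neighborFinset, true_and, Set.mem_diff, Set.mem_union,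
    Set.mem_setOf_eq, Set.mem_singleton_iff]
  push_neg
  constructor
  · rintro ⟨h0, h1, h2⟩
    have hge2 : 2 ≤ G.dist u vstar := by
      rcases Nat.lt_or_ge (G.dist u vstar) 2 with h | h
      · interval_cases h' : G.dist u vstar
        · exact absurd (hconn.dist_eq_zero_iff.mp h') h0
        · exact absurd (SimpleGraph.dist_eq_one_iff_adj.mp h').symm h2
      · exact h
    have := hdist3 u
    exact ⟨by omega, h1⟩
  · rintro ⟨hd, hne⟩
    refine ⟨?_, hne, ?_⟩
    · intro h; rw [h, SimpleGraph.dist_self] at hd; omega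
    · intro h
      rw [← SimpleGraph.dist_eq_one_iff_adj, SimpleGraph.dist_comm] at h
      omega
end

section
/- Every RK graph contains a Hamiltonian path, i.e., a path that visits every vertex of the graph exactly once. -/
set_option linter.unusedSectionVars false

open SimpleGraph List

section helpers
variable {V : Type*} [Fintype V] [DecidableEq V] (G : SimpleGraph V) [DecidableRel G.Adj]

/-- From a nonempty adjacency chain list, get a walk with that support. -/
lemma exists_walk_support : ∀ (l : List V), l.Chain' G.Adj → l ≠ [] →
    ∃ (u v : V) (p : G.Walk u v), p.support = l := by
  intro l
  induction l with
  | nil => intro _ h; exact absurd rfl h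
  | cons a rest ih =>
    intro hch _
    match rest, hch with
    | [], _ => exact ⟨a, a, Walk.nil, rfl⟩
    | b :: t, hch =>
      obtain ⟨hab, hch'⟩ := List.isChain_cons_cons.mp hch
      obtain ⟨u, v, p, hp⟩ := ih hch' (by simp)
      have hub : u = b := by
        have := p.support_eq_cons
        rw [hp] at this
        exact ((List.cons.injEq _ _ _ _ ▸ this).1).symm
      subst hub
      exact ⟨a, v, Walk.cons hab p, by simp [hp]⟩

/-- There is a maximal-length nonempty nodup chain. -/
lemma exists_max_chain [Nonempty V] : ∃ l : List V, l ≠ [] ∧ l.Chain' G.Adj ∧ l.Nodup ∧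
    ∀ m : List V, m.Chain' G.Adj → m.Nodup → m.length ≤ l.length := by
  classical
  set P : ℕ → Prop := fun j => ∃ l : List V, l ≠ [] ∧ l.Chain' G.Adj ∧ l.Nodup ∧ l.length = j
    with hP
  haveI : DecidablePred P := Classical.decPred P
  obtain ⟨v⟩ := ‹Nonempty V›
  have h1 : P 1 := ⟨[v], by simp, List.isChain_singleton v, by simp, rfl⟩
  have hb : ∀ j, P j → j ≤ Fintype.card V := by
    rintro j ⟨l, -, -, hnd, hlen⟩
    exact hlen ▸ hnd.length_le_card
  have hcard : 1 ≤ Fintype.card V := Fintype.card_pos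
  have hk : P (Nat.findGreatest P (Fintype.card V)) :=
    Nat.findGreatest_spec hcard h1
  obtain ⟨l, hne, hch, hnd, hlen⟩ := hk
  refine ⟨l, hne, hch, hnd, fun m hmch hmnd => ?_⟩
  rcases eq_or_ne m [] with rfl | hmne
  · simp
  by_contra hlt
  push_neg at hlt
  rw [hlen] at hlt
  exact Nat.findGreatest_is_greatest hlt (hb _ ⟨m, hmne, hmch, hmnd, rfl⟩)
    ⟨m, hmne, hmch, hmnd, rfl⟩

/-- If a chain doesn't cover all vertices, some vertex on it has a neighbor off it. -/
lemma exists_off_adj (hconn : G.Connected) (l : List V) (hne : l ≠ [])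
    (hlt : l.length < Fintype.card V) :
    ∃ a ∈ l, ∃ w, w ∉ l ∧ G.Adj a w := by
  classical
  have hne' : l.toFinset ≠ Finset.univ := by
    intro h
    have : Fintype.card V ≤ l.length := by
      calc Fintype.card V = l.toFinset.card := by rw [h, Finset.card_univ]
        _ ≤ l.length := l.toFinset_card_le
    omega
  obtain ⟨b, hb⟩ : ∃ b, b ∉ l := by
    by_contra h
    push_neg at h
    exact hne' (Finset.eq_univ_iff_forall.mpr fun x => List.mem_toFinset.mpr (h x))
  obtain ⟨p⟩ := hconn.preconnected (l.head hne) b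
  obtain ⟨d, -, hd1, hd2⟩ := p.exists_boundary_dart {x | x ∈ l} (List.head_mem hne) hb
  exact ⟨d.fst, hd1, d.snd, hd2, d.adj⟩

/-- A chain with a closing edge gives a `Cycle.Chain`. -/
lemma cycle_chain_of_chain' (l : List V) (hne : l ≠ []) (hch : l.Chain' G.Adj)
    (hcl : G.Adj (l.getLast hne) (l.head hne)) :
    Cycle.Chain G.Adj (↑l : Cycle V) := by
  cases l with
  | nil => exact absurd rfl hne
  | cons b m =>
    rw [Cycle.chain_coe_cons]
    have h2 : List.Chain' G.Adj ((b :: m) ++ [b]) := by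
      rw [List.Chain', List.isChain_append]
      refine ⟨hch, List.isChain_singleton b, ?_⟩
      intro x hx y hy
      simp only [List.head?_cons, Option.mem_def, Option.some.injEq] at hy
      rw [List.getLast?_eq_getLast (by simp)] at hx
      simp only [Option.mem_def, Option.some.injEq] at hx
      subst hx; subst hy
      simpa using hcl
    simpa [List.Chain'] using h2

/-- A "cycle" list (chain with a closing edge) that is not spanning can be extended. -/
lemma cycle_longer (hconn : G.Connected) (l : List V) (hne : l ≠ [])
    (hch : l.Chain' G.Adj) (hnd : l.Nodup)
    (hcl : G.Adj (l.getLast hne) (l.head hne))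
    (hlt : l.length < Fintype.card V) :
    ∃ m : List V, m.Chain' G.Adj ∧ m.Nodup ∧ m.length = l.length + 1 := by
  classical
  obtain ⟨a, ha, w, hw, haw⟩ := exists_off_adj G hconn l hne hlt
  obtain ⟨l₁, l₂, hl⟩ := List.append_of_mem ha
  have hrot : l ~r (a :: (l₂ ++ l₁)) := by
    rw [hl]
    have := List.isRotated_append (l := l₁) (l' := a :: l₂)
    simpa using this
  have hCyc : Cycle.Chain G.Adj (↑l : Cycle V) := cycle_chain_of_chain' G l hne hch hcl
  have hCyc' : Cycle.Chain G.Adj (↑(a :: (l₂ ++ l₁)) : Cycle V) := by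
    rwa [Cycle.coe_eq_coe.mpr hrot] at hCyc
  rw [Cycle.chain_coe_cons] at hCyc'
  have hch' : List.Chain' G.Adj (a :: (l₂ ++ l₁)) := by
    have h2 : List.Chain' G.Adj (a :: ((l₂ ++ l₁) ++ [a])) := hCyc'
    exact h2.prefix ⟨[a], by simp⟩
  refine ⟨w :: a :: (l₂ ++ l₁), ?_, ?_, ?_⟩
  · exact List.isChain_cons_cons.mpr ⟨haw.symm, hch'⟩
  · have hperm : l ~ (a :: (l₂ ++ l₁)) := hrot.perm
    have hnd' : (a :: (l₂ ++ l₁)).Nodup := hperm.nodup hnd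
    refine List.nodup_cons.mpr ⟨fun hmem => hw ?_, hnd'⟩
    exact hperm.symm.mem_iff.mp hmem
  · have := hrot.perm.length_eq
    simp only [List.length_cons] at this ⊢
    omega



omit [Fintype V] [DecidableEq V] [DecidableRel G.Adj] in
lemma crossing_cycle (l : List V) (hne : l ≠ []) (hch : l.Chain' G.Adj)
    (i : ℕ) (hik : i + 1 < l.length)
    (hadj1 : G.Adj (l.head hne) (l[i+1]'hik)) :
    ∃ (c : List V) (hcne : c ≠ []), c.Chain' G.Adj ∧ c ~ l ∧
      c.getLast hcne = l.getLast hne ∧ c.head hcne = l[i]'(by omega) := by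
  have htne : l.take (i+1) ≠ [] := by
    intro h
    have := congrArg List.length h
    rw [List.length_take] at this
    simp only [List.length_nil] at this
    omega
  have hdne : l.drop (i+1) ≠ [] := by
    intro h
    have := congrArg List.length h
    rw [List.length_drop] at this
    simp only [List.length_nil] at this
    omega
  refine ⟨(l.take (i+1)).reverse ++ l.drop (i+1), by simp [htne], ?_, ?_, ?_, ?_⟩
  · rw [List.Chain', List.isChain_append]
    refine ⟨?_, hch.suffix (List.drop_suffix _ _), ?_⟩
    · rw [List.isChain_reverse]
      exact (hch.prefix (List.take_prefix _ _)).imp (fun a b hab => hab.symm)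
    · intro x hx y hy
      rw [List.getLast?_reverse] at hx
      rw [List.head?_eq_head htne] at hx
      rw [List.head?_eq_head hdne] at hy
      simp only [Option.mem_def, Option.some.injEq] at hx hy
      subst hx; subst hy
      rw [List.head_drop]
      have : (l.take (i+1)).head htne = l.head hne := by
        rw [List.head_take]
      rw [this]
      exact hadj1
  · calc (l.take (i+1)).reverse ++ l.drop (i+1)
        ~ l.take (i+1) ++ l.drop (i+1) := ((l.take (i+1)).reverse_perm).append_right _
      _ = l := l.take_append_drop _
  · rw [List.getLast_append_of_ne_nil _ hdne, List.getLast_drop]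
  · rw [List.head_append_of_ne_nil (by simpa using htne), List.head_reverse,
      List.getLast_eq_getElem, List.getElem_take]
    congr 1
    simp; omega

set_option maxHeartbeats 1000000 in
theorem main_argument (hconn : G.Connected)
    (hRK2 : ∀ u v : V, u ≠ v → ¬ G.Adj u v →
      Fintype.card V + 1 ≤ G.degree u + G.degree v + G.dist u v)
    (l : List V) (hne : l ≠ []) (hch : l.Chain' G.Adj) (hnd : l.Nodup)
    (hmax : ∀ m : List V, m.Chain' G.Adj → m.Nodup → m.length ≤ l.length)
    (hk : l.length < Fintype.card V) : False := by
  classical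
  set n := Fintype.card V with hn
  set k := l.length with hkdef
  -- k ≥ 2
  obtain ⟨a, hal, w, hwl, haw⟩ := exists_off_adj G hconn l hne hk
  have hk2 : 2 ≤ k := by
    have := hmax [a, w] (List.isChain_pair.mpr haw)
      (by simp [List.nodup_cons]; exact fun h => hwl (h ▸ hal))
    simpa using this
  set v₀ := l.head hne with hv₀
  set f : ℕ → V := fun i => l.getD i v₀ with hf
  have fget : ∀ {i : ℕ} (h : i < k), f i = l[i]'h := fun h => List.getD_eq_getElem l v₀ h
  have hfinj : ∀ {i j : ℕ}, i < k → j < k → f i = f j → i = j := by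
    intro i j hi hj hij
    rw [fget hi, fget hj] at hij
    have := List.nodup_iff_injective_getElem.mp hnd
      (a₁ := ⟨i, hi⟩) (a₂ := ⟨j, hj⟩) hij
    exact congrArg Fin.val this
  have hadjf : ∀ {i : ℕ}, i + 1 < k → G.Adj (f i) (f (i+1)) := by
    intro i hi
    rw [fget (by omega), fget hi]
    have := List.isChain_iff_getElem.mp hch i (by omega)
    simpa using this
  have hmemf : ∀ x ∈ l, ∃ i, ∃ h : i < k, f i = x := by
    intro x hx
    obtain ⟨i, hi, hix⟩ := List.mem_iff_getElem.mp hx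
    exact ⟨i, hi, by rw [fget hi]; exact hix⟩
  set v1 := f 0 with hv1
  set vk := f (k-1) with hvk
  have hheadv1 : l.head hne = v1 := by
    rw [hv1, fget (by omega)]
    exact List.head_eq_getElem_zero hne
  have hlastvk : l.getLast hne = vk := by
    rw [hvk, fget (by omega)]
    exact List.getLast_eq_getElem hne
  -- all neighbors of v1 and vk are on l
  have hnbr1 : ∀ x, G.Adj v1 x → x ∈ l := by
    intro x hadj
    by_contra hx
    have hch' : (x :: l).Chain' G.Adj := by
      rw [List.Chain', List.isChain_cons]
      refine ⟨?_, hch⟩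
      intro y hy
      rw [List.head?_eq_head hne] at hy
      simp only [Option.mem_def, Option.some.injEq] at hy
      subst hy
      rw [hheadv1]
      exact hadj.symm
    have := hmax (x :: l) hch' (List.nodup_cons.mpr ⟨hx, hnd⟩)
    simp only [List.length_cons] at this
    omega
  have hnbrk : ∀ x, G.Adj vk x → x ∈ l := by
    intro x hadj
    by_contra hx
    have hch' : (l ++ [x]).Chain' G.Adj := by
      rw [List.Chain', List.isChain_append]
      refine ⟨hch, List.isChain_singleton x, ?_⟩
      intro y hy z hz
      rw [List.getLast?_eq_getLast hne] at hy
      simp only [List.head?_cons, Option.mem_def, Option.some.injEq] at hy hz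
      subst hy; subst hz
      rw [hlastvk]
      exact hadj
    have := hmax (l ++ [x]) hch'
      (by rw [List.nodup_append]; exact ⟨hnd, List.nodup_singleton x, fun a ha b hb hab => hx (by simp at hb; rw [← hb, ← hab]; exact ha)⟩)
    simp only [List.length_append, List.length_singleton] at this
    omega
  -- no spanning cycle of l
  have hnocycle : ∀ (c : List V) (hcne : c ≠ []), c.Chain' G.Adj → c.Nodup →
      c.length = k → G.Adj (c.getLast hcne) (c.head hcne) → False := by
    intro c hcne hc1 hc2 hclen hccl
    obtain ⟨m, hm1, hm2, hm3⟩ := cycle_longer G hconn c hcne hc1 hc2 hccl (by omega)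
    have := hmax m hm1 hm2
    omega
  have hne1k : v1 ≠ vk := by
    intro h
    have := hfinj (by omega) (by omega) h
    omega
  have hnadj : ¬ G.Adj v1 vk := by
    intro h
    exact hnocycle l hne hch hnd rfl (by rw [hheadv1, hlastvk]; exact h.symm)
  have hcross : ∀ i : ℕ, i + 1 < k → ¬(G.Adj v1 (f (i+1)) ∧ G.Adj vk (f i)) := by
    rintro i hik ⟨h1, h2⟩
    obtain ⟨c, hcne, hcch, hcperm, hclast, hchead⟩ := crossing_cycle G l hne hch i hik
      (by rw [hheadv1, ← fget hik]; exact h1)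
    refine hnocycle c hcne hcch (hcperm.symm.nodup hnd) (hcperm.length_eq) ?_
    rw [hclast, hchead, hlastvk, ← fget (by omega : i < k)]
    exact h2
  -- degree counts
  set A : Finset ℕ := (Finset.range (k-1)).filter (fun i => G.Adj v1 (f (i+1))) with hA
  set B : Finset ℕ := (Finset.range (k-1)).filter (fun i => G.Adj vk (f i)) with hB
  have hdeg1 : G.degree v1 = A.card := by
    rw [← card_neighborFinset_eq_degree]
    refine (Finset.card_bij (fun i hi => f (i+1)) ?_ ?_ ?_).symm
    · intro i hi
      rw [hA, Finset.mem_filter, Finset.mem_range] at hi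
      rw [mem_neighborFinset]
      exact hi.2
    · intro i hi j hj hij
      rw [hA, Finset.mem_filter, Finset.mem_range] at hi hj
      have := hfinj (by omega) (by omega) hij
      omega
    · intro x hx
      rw [mem_neighborFinset] at hx
      obtain ⟨j, hj, hjx⟩ := hmemf x (hnbr1 x hx)
      have hj0 : j ≠ 0 := by
        intro h
        subst h
        exact G.ne_of_adj hx (hv1.trans hjx)
      refine ⟨j - 1, ?_, ?_⟩
      · rw [hA, Finset.mem_filter, Finset.mem_range]
        have : j - 1 + 1 = j := by omega
        rw [this, hjx]
        exact ⟨by omega, hx⟩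
      · show f (j - 1 + 1) = x
        have h9 : j - 1 + 1 = j := by omega
        rw [h9, hjx]
  have hdegk : G.degree vk = B.card := by
    rw [← card_neighborFinset_eq_degree]
    refine (Finset.card_bij (fun i hi => f i) ?_ ?_ ?_).symm
    · intro i hi
      rw [hB, Finset.mem_filter, Finset.mem_range] at hi
      rw [mem_neighborFinset]
      exact hi.2
    · intro i hi j hj hij
      rw [hB, Finset.mem_filter, Finset.mem_range] at hi hj
      exact hfinj (by omega) (by omega) hij
    · intro x hx
      rw [mem_neighborFinset] at hx
      obtain ⟨j, hj, hjx⟩ := hmemf x (hnbrk x hx)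
      have hjk : j ≠ k - 1 := by
        intro h
        subst h
        exact G.ne_of_adj hx (hvk.trans hjx)
      refine ⟨j, ?_, hjx⟩
      rw [hB, Finset.mem_filter, Finset.mem_range]
      exact ⟨by omega, hjx ▸ hx⟩
  have hAB : Disjoint A B := by
    rw [Finset.disjoint_left]
    intro i hiA hiB
    rw [hA, Finset.mem_filter, Finset.mem_range] at hiA
    rw [hB, Finset.mem_filter] at hiB
    exact hcross i (by omega) ⟨hiA.2, hiB.2⟩
  -- distances
  set dh : ℕ → ℕ := fun i => G.dist (f i) vk with hdh
  set δ : ℕ := G.dist v1 vk with hδ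
  have hdh0 : dh 0 = δ := rfl
  have hdhk : dh (k-1) = 0 := by
    rw [hdh]
    simp only [hvk]
    exact SimpleGraph.dist_self
  have hδ1 : 1 ≤ δ := hconn.pos_dist_of_ne hne1k
  have hLip : ∀ i : ℕ, i + 1 < k → dh i ≤ dh (i+1) + 1 ∧ dh (i+1) ≤ dh i + 1 := by
    intro i hi
    have hadj := hadjf hi
    have h1 : G.dist (f i) (f (i+1)) = 1 := SimpleGraph.dist_eq_one_iff_adj.mpr hadj
    have h2 : G.dist (f (i+1)) (f i) = 1 := SimpleGraph.dist_eq_one_iff_adj.mpr hadj.symm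
    have e1 : dh i = G.dist (f i) vk := rfl
    have e2 : dh (i+1) = G.dist (f (i+1)) vk := rfl
    constructor
    · have := hconn.dist_triangle (u := f i) (v := f (i+1)) (w := vk)
      omega
    · have := hconn.dist_triangle (u := f (i+1)) (v := f i) (w := vk)
      omega
  have ivt : ∀ (d a t : ℕ), a + d < k → t ≤ dh a → dh (a+d) ≤ t →
      ∃ i, a ≤ i ∧ i ≤ a + d ∧ dh i = t := by
    intro d
    induction d with
    | zero =>
      intro a t h1 h2 h3
      rw [Nat.add_zero] at h3
      exact ⟨a, le_refl a, by omega, by omega⟩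
    | succ d ih =>
      intro a t h1 h2 h3
      by_cases hat : dh a = t
      · exact ⟨a, le_refl a, by omega, hat⟩
      · have hL := hLip a (by omega)
        have h4 : t ≤ dh (a+1) := by omega
        have h5 : a + 1 + d < k := by omega
        have h6 : dh (a + 1 + d) ≤ t := by
          have : a + 1 + d = a + (d+1) := by omega
          rw [this]
          exact h3
        obtain ⟨i, hi1, hi2, hi3⟩ := ih (a+1) t h5 h4 h6
        exact ⟨i, by omega, by omega, hi3⟩
  set e : ℕ → ℕ := fun t => Nat.findGreatest (fun i => dh i = t) (k-1) with he
  have hewit : ∀ t, 1 ≤ t → t ≤ δ → dh (e t) = t := by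
    intro t ht1 htδ
    have h0 : dh (0 + (k-1)) ≤ t := by
      have h00 : 0 + (k-1) = k-1 := by omega
      rw [h00, hdhk]
      omega
    obtain ⟨i, hi1, hi2, hi3⟩ := ivt (k-1) 0 t (by omega) (by rw [hdh0]; omega) h0
    exact Nat.findGreatest_spec (P := fun i => dh i = t) (n := k-1) (m := i) (by omega) hi3
  have hele : ∀ t, e t ≤ k - 1 := fun t => Nat.findGreatest_le (k-1)
  have helt : ∀ t, 1 ≤ t → t ≤ δ → e t < k - 1 := by
    intro t ht1 htδ
    have h1 := hewit t ht1 htδ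
    have h2 := hele t
    rcases Nat.lt_or_ge (e t) (k-1) with h | h
    · exact h
    · have : e t = k - 1 := by omega
      rw [this, hdhk] at h1
      omega
  have hemax : ∀ t j, e t < j → j ≤ k - 1 → dh j ≠ t := by
    intro t j h1 h2
    exact Nat.findGreatest_is_greatest (P := fun i => dh i = t) (n := k-1) h1 h2
  have hesucc : ∀ t, 1 ≤ t → t ≤ δ → dh (e t + 1) = t - 1 := by
    intro t ht1 htδ
    have h1 := hewit t ht1 htδ
    have h2 := helt t ht1 htδ
    have hne_t : dh (e t + 1) ≠ t := hemax t (e t + 1) (by omega) (by omega)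
    have hL := hLip (e t) (by omega)
    -- dh (e t + 1) ∈ {t-1, t, t+1}
    rcases Nat.lt_or_ge (dh (e t + 1)) t with h | h
    · omega
    · -- dh (e t + 1) ≥ t, so ≥ t (and ≠ t): find a later index with value t, contradiction
      exfalso
      have h5 : (e t + 1) + (k - 1 - (e t + 1)) = k - 1 := by omega
      have h6 : dh ((e t + 1) + (k - 1 - (e t + 1))) ≤ t := by
        rw [h5, hdhk]; omega
      obtain ⟨i, hi1, hi2, hi3⟩ := ivt (k - 1 - (e t + 1)) (e t + 1) t (by omega) h (by omega) |>.imp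
        (fun i hi => hi)
      · exact hemax t i (by omega) (by omega) hi3
  -- RK inequality
  have hRKapp : n + 1 ≤ G.degree v1 + G.degree vk + δ := hRK2 v1 vk hne1k hnadj
  -- final counting
  have hABr : A ∪ B ⊆ Finset.range (k-1) := by
    intro i hi
    rcases Finset.mem_union.mp hi with h | h
    · exact Finset.mem_of_mem_filter i h
    · exact Finset.mem_of_mem_filter i h
  have hfinal : A.card + B.card + δ ≤ k + 1 := by
    rcases Nat.lt_or_ge δ 3 with hδ3 | hδ3
    · have h1 : (A ∪ B).card ≤ k - 1 := by
        calc (A ∪ B).card ≤ (Finset.range (k-1)).card := Finset.card_le_card hABr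
          _ = k - 1 := Finset.card_range _
      rw [Finset.card_union_of_disjoint hAB] at h1
      omega
    · set E : Finset ℕ := (Finset.Icc 2 (δ-1)).image e with hE
      have hEcard : E.card = δ - 2 := by
        rw [hE, Finset.card_image_of_injOn, Nat.card_Icc]
        · omega
        · intro s hs t ht hst
          simp only [Finset.coe_Icc, Set.mem_Icc] at hs ht
          have h1 := hewit s (by omega) (by omega)
          have h2 := hewit t (by omega) (by omega)
          rw [hst] at h1
          omega
      have hEr : E ⊆ Finset.range (k-1) := by
        intro i hi
        rw [hE, Finset.mem_image] at hi
        obtain ⟨t, ht, rfl⟩ := hi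
        rw [Finset.mem_Icc] at ht
        rw [Finset.mem_range]
        exact helt t (by omega) (by omega)
      have hEA : Disjoint E A := by
        rw [Finset.disjoint_left]
        intro i hiE hiA
        rw [hE, Finset.mem_image] at hiE
        obtain ⟨t, ht, rfl⟩ := hiE
        rw [Finset.mem_Icc] at ht
        rw [hA, Finset.mem_filter] at hiA
        -- Adj v1 (f (e t + 1)) but dh (e t + 1) = t - 1
        have h1 : G.dist v1 (f (e t + 1)) = 1 := SimpleGraph.dist_eq_one_iff_adj.mpr hiA.2
        have h2 : dh (e t + 1) = t - 1 := hesucc t (by omega) (by omega)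
        have h3 : δ ≤ G.dist v1 (f (e t + 1)) + G.dist (f (e t + 1)) vk :=
          hconn.dist_triangle
        rw [h1] at h3
        have h4 : G.dist (f (e t + 1)) vk = t - 1 := h2
        omega
      have hEB : Disjoint E B := by
        rw [Finset.disjoint_left]
        intro i hiE hiB
        rw [hE, Finset.mem_image] at hiE
        obtain ⟨t, ht, rfl⟩ := hiE
        rw [Finset.mem_Icc] at ht
        rw [hB, Finset.mem_filter] at hiB
        have h1 : G.dist (f (e t)) vk = 1 := by
          rw [SimpleGraph.dist_comm]
          exact SimpleGraph.dist_eq_one_iff_adj.mpr hiB.2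
        have h2 : dh (e t) = t := hewit t (by omega) (by omega)
        have h3 : dh (e t) = G.dist (f (e t)) vk := rfl
        omega
      have h1 : (A ∪ B ∪ E).card ≤ k - 1 := by
        refine le_trans (Finset.card_le_card ?_) (by rw [Finset.card_range])
        intro i hi
        rcases Finset.mem_union.mp hi with h | h
        · exact hABr h
        · exact hEr h
      have h2 : (A ∪ B ∪ E).card = A.card + B.card + E.card := by
        rw [Finset.card_union_of_disjoint, Finset.card_union_of_disjoint hAB]
        rw [Finset.disjoint_union_left]
        exact ⟨hEA.symm, hEB.symm⟩
      omega
  rw [hdeg1, hdegk] at hRKapp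
  omega


end helpers

/-- Every RK graph contains a Hamiltonian path: a path visiting every vertex exactly once. -/
theorem stmt15 {V : Type*} [Fintype V] [DecidableEq V]
    (G : SimpleGraph V) [DecidableRel G.Adj]
    (hRK : IsRKGraph G) :
    ∃ (u v : V) (p : G.Walk u v), p.IsHamiltonian := by
  classical
  obtain ⟨hconn, hRK2⟩ := hRK
  haveI : Nonempty V := hconn.nonempty
  obtain ⟨l, hne, hch, hnd, hmax⟩ := exists_max_chain G
  have hlen : l.length = Fintype.card V := by
    rcases eq_or_lt_of_le hnd.length_le_card with h | h
    · exact h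
    · exact absurd (main_argument G hconn hRK2 l hne hch hnd hmax h) not_false
  obtain ⟨u, v, p, hp⟩ := exists_walk_support G l hch hne
  refine ⟨u, v, p, ?_⟩
  have hpath : p.IsPath := SimpleGraph.Walk.IsPath.mk' (hp ▸ hnd)
  refine hpath.isHamiltonian_of_mem (fun x => ?_)
  rw [hp]
  have h1 : l.toFinset = Finset.univ :=
    Finset.eq_univ_of_card _ (by rw [List.toFinset_card_of_nodup hnd, hlen])
  rw [← List.mem_toFinset, h1]
  exact Finset.mem_univ x
end
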